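/- arXiv:1211.2942 — 14 statements merged into one kernel-verified Lean document; each statement's English description precedes it below -/
import Mathlib

section
/- Let n be a positive integer and let h : F_2^n → F_2^n be any function. Then the set D_h = {Ψ(d) + 2Ψ(h(d)) : d ∈ F_2^n} ⊆ (Z/4)^n is a (2^n,2^n,2^n,1)-relative difference set in (Z/4)^n relative to the subgroup N = 2(Z/4)^n if and only if for every a ∈ F_2^n with a ≠ 0 the map Δ_{h,a} : F_2^n → F_2^n, Δ_{h,a}(d) = h(d+a) + h(d) + d ⊙ a, is a bijection of F_2^n. -/
open Function

/-- The embedding ψ : F₂ → ℤ/4 with ψ(0)=0, ψ(1)=1. -/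
def psi : ZMod 2 → ZMod 4 := fun x => (x.val : ZMod 4)

/-- The coordinatewise extension Ψ : F₂ⁿ → (ℤ/4)ⁿ of ψ. -/
def Psi {n : ℕ} (x : Fin n → ZMod 2) : Fin n → ZMod 4 := fun i => psi (x i)

/-- Coordinatewise product on F₂ⁿ. -/
def odot {n : ℕ} (x y : Fin n → ZMod 2) : Fin n → ZMod 2 := fun i => x i * y i

/-- `D` is a (2ⁿ,2ⁿ,2ⁿ,1)-relative difference set in (ℤ/4)ⁿ relative to the
subgroup N = 2(ℤ/4)ⁿ (the elements of order at most 2): `D` has 2ⁿ elements,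
every element outside N is a difference of elements of `D` in exactly one way,
and no nonzero element of N is a difference of two distinct elements of `D`. -/
def IsRDS (n : ℕ) (D : Set (Fin n → ZMod 4)) : Prop :=
  D.ncard = 2 ^ n ∧
  (∀ g : Fin n → ZMod 4, g + g ≠ 0 →
    ∃! p : (Fin n → ZMod 4) × (Fin n → ZMod 4),
      p.1 ∈ D ∧ p.2 ∈ D ∧ p.1 - p.2 = g) ∧
  (∀ g : Fin n → ZMod 4, g + g = 0 → g ≠ 0 →
    ¬ ∃ d₁ ∈ D, ∃ d₂ ∈ D, d₁ ≠ d₂ ∧ d₁ - d₂ = g)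

lemma psi_sub (u v s t : ZMod 2) :
    (psi u + 2 * psi s) - (psi v + 2 * psi t) = psi (u + v) + 2 * psi (v * (u + v) + s + t) := by
  revert u v s t; decide

lemma psi_inj (x y x' y' : ZMod 2) (hh : psi x + 2 * psi y = psi x' + 2 * psi y') : x = x' ∧ y = y' := by
  revert x y x' y' hh; decide

lemma psi_order (x y : ZMod 2) : (psi x + 2 * psi y) + (psi x + 2 * psi y) = 0 ↔ x = 0 := by
  revert x y; decide

def g2a : ZMod 4 → ZMod 2 := fun x => (x.val : ZMod 2)
def g2b : ZMod 4 → ZMod 2 := fun x => ((x.val / 2 : ℕ) : ZMod 2)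

lemma g2_spec (x : ZMod 4) : x = psi (g2a x) + 2 * psi (g2b x) := by revert x; decide

lemma z2_shift (u v w : ZMod 2) (hh : u + v = w) : u = v + w := by revert u v w hh; decide

/-- The key pointwise computation: differences of elements of `D_h`. -/
lemma key {n : ℕ} (h : (Fin n → ZMod 2) → (Fin n → ZMod 2)) (d₁ d₂ a b : Fin n → ZMod 2) :
    (Psi d₁ + 2 * Psi (h d₁)) - (Psi d₂ + 2 * Psi (h d₂)) = Psi a + 2 * Psi b ↔
    (d₁ = d₂ + a ∧ h (d₂ + a) + h d₂ + odot d₂ a = b) := by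
  constructor
  · intro H
    have H1 : ∀ i, d₁ i + d₂ i = a i ∧ d₂ i * (d₁ i + d₂ i) + h d₁ i + h d₂ i = b i := by
      intro i
      have hi : (psi (d₁ i) + 2 * psi (h d₁ i)) - (psi (d₂ i) + 2 * psi (h d₂ i))
          = psi (a i) + 2 * psi (b i) := congrFun H i
      rw [psi_sub] at hi
      exact psi_inj _ _ _ _ hi
    have hd : d₁ = d₂ + a := funext fun i => z2_shift _ _ _ (H1 i).1
    refine ⟨hd, funext fun i => ?_⟩
    have h2 := (H1 i).2
    rw [(H1 i).1] at h2
    rw [← hd]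
    show h d₁ i + h d₂ i + d₂ i * a i = b i
    rw [← h2]; ring
  · rintro ⟨hd, hb⟩
    subst hd
    funext i
    have : (psi (d₂ i + a i) + 2 * psi (h (d₂ + a) i)) - (psi (d₂ i) + 2 * psi (h d₂ i))
        = psi ((d₂ i + a i) + d₂ i) + 2 * psi (d₂ i * ((d₂ i + a i) + d₂ i) + h (d₂ + a) i + h d₂ i) :=
      psi_sub _ _ _ _
    show (psi ((d₂ + a) i) + 2 * psi (h (d₂ + a) i)) - (psi (d₂ i) + 2 * psi (h d₂ i))
        = psi (a i) + 2 * psi (b i)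
    rw [show (d₂ + a) i = d₂ i + a i from rfl, this]
    have ha : (d₂ i + a i) + d₂ i = a i := by
      have : ∀ u v : ZMod 2, u + v + u = v := by decide
      exact this _ _
    rw [ha, ← hb]
    show psi (a i) + 2 * psi (d₂ i * a i + h (d₂+a) i + h d₂ i)
        = psi (a i) + 2 * psi (h (d₂+a) i + h d₂ i + d₂ i * a i)
    ring_nf

/-- `D_h` is a (2ⁿ,2ⁿ,2ⁿ,1)-RDS in (ℤ/4)ⁿ relative to 2(ℤ/4)ⁿ iff
for every nonzero `a` the map `d ↦ h(d+a) + h(d) + d ⊙ a` is a bijection. -/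
theorem stmt0 (n : ℕ) (hn : 0 < n) (h : (Fin n → ZMod 2) → (Fin n → ZMod 2)) :
    IsRDS n {ξ | ∃ d : Fin n → ZMod 2, ξ = Psi d + 2 * Psi (h d)} ↔
    ∀ a : Fin n → ZMod 2, a ≠ 0 →
      Bijective (fun d : Fin n → ZMod 2 => h (d + a) + h d + odot d a) := by
  set φ : (Fin n → ZMod 2) → (Fin n → ZMod 4) := fun d => Psi d + 2 * Psi (h d) with hφ
  have hφinj : Injective φ := by
    intro d d' hdd
    funext i
    have hi : psi (d i) + 2 * psi (h d i) = psi (d' i) + 2 * psi (h d' i) := congrFun hdd i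
    exact (psi_inj _ _ _ _ hi).1
  have hDrange : {ξ | ∃ d : Fin n → ZMod 2, ξ = Psi d + 2 * Psi (h d)} = Set.range φ := by
    ext x; simp [hφ, Set.mem_range, eq_comm]
  constructor
  · rintro ⟨-, H2, -⟩ a ha
    rw [← Finite.injective_iff_bijective]
    intro d d' hdd
    simp only at hdd
    set b : Fin n → ZMod 2 := h (d + a) + h d + odot d a with hb
    set g : Fin n → ZMod 4 := Psi a + 2 * Psi b with hg
    have hgg : g + g ≠ 0 := by
      obtain ⟨i, hi⟩ := Function.ne_iff.mp ha
      intro h0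
      have : (psi (a i) + 2 * psi (b i)) + (psi (a i) + 2 * psi (b i)) = 0 := congrFun h0 i
      exact hi ((psi_order _ _).mp this)
    obtain ⟨p, -, hpuniq⟩ := H2 g hgg
    have e1 : (φ (d + a), φ d) = p := by
      apply hpuniq
      exact ⟨⟨d + a, rfl⟩, ⟨d, rfl⟩, (key h (d + a) d a b).mpr ⟨rfl, rfl⟩⟩
    have e2 : (φ (d' + a), φ d') = p := by
      apply hpuniq
      exact ⟨⟨d' + a, rfl⟩, ⟨d', rfl⟩, (key h (d' + a) d' a b).mpr ⟨rfl, hdd.symm⟩⟩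
    have : φ d = φ d' := by
      have := e1.trans e2.symm
      exact congrArg Prod.snd this
    exact hφinj this
  · intro hbij
    refine ⟨?_, ?_, ?_⟩
    · rw [hDrange, ← Nat.card_coe_set_eq, Nat.card_range_of_injective hφinj]
      simp [Nat.card_eq_fintype_card]
    · intro g hgg
      set a : Fin n → ZMod 2 := fun i => g2a (g i) with haa
      set b : Fin n → ZMod 2 := fun i => g2b (g i) with hbb
      have hgab : g = Psi a + 2 * Psi b := funext fun i => g2_spec (g i)
      have ha : a ≠ 0 := by
        obtain ⟨i, hi⟩ := Function.ne_iff.mp hgg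
        intro h0
        apply hi
        have hgi : g i = psi (a i) + 2 * psi (b i) := g2_spec (g i)
        show g i + g i = 0
        rw [hgi]
        exact (psi_order _ _).mpr (congrFun h0 i)
      obtain ⟨d, hd, hduniq⟩ := (hbij a ha).existsUnique b
      refine ⟨(φ (d + a), φ d), ⟨⟨d + a, rfl⟩, ⟨d, rfl⟩, ?_⟩, ?_⟩
      · rw [hgab]; exact (key h (d + a) d a b).mpr ⟨rfl, hd⟩
      · rintro ⟨ξ₁, ξ₂⟩ ⟨⟨e₁, he₁⟩, ⟨e₂, he₂⟩, hdiff⟩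
        rw [hgab, he₁, he₂] at hdiff
        obtain ⟨hee, heb⟩ := (key h e₁ e₂ a b).mp hdiff
        have : e₂ = d := hduniq e₂ heb
        subst this
        have he₁' : ξ₁ = Psi e₁ + 2 * Psi (h e₁) := he₁
        have he₂' : ξ₂ = Psi e₂ + 2 * Psi (h e₂) := he₂
        simp only [Prod.mk.injEq]
        exact ⟨by rw [he₁', hee], he₂'⟩
    · intro g hgg hg0
      rintro ⟨d₁, ⟨e₁, he₁⟩, d₂, ⟨e₂, he₂⟩, hne, hdiff⟩
      set a : Fin n → ZMod 2 := fun i => g2a (g i) with haa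
      set b : Fin n → ZMod 2 := fun i => g2b (g i) with hbb
      have hgab : g = Psi a + 2 * Psi b := funext fun i => g2_spec (g i)
      have ha0 : a = 0 := by
        funext i
        have : (psi (a i) + 2 * psi (b i)) + (psi (a i) + 2 * psi (b i)) = 0 := by
          have hgi : g i = psi (a i) + 2 * psi (b i) := g2_spec (g i)
          rw [← hgi]; exact congrFun hgg i
        exact (psi_order _ _).mp this
      rw [hgab, he₁, he₂] at hdiff
      obtain ⟨hee, -⟩ := (key h e₁ e₂ a b).mp hdiff
      apply hne
      rw [he₁, he₂, hee, ha0, add_zero]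
end

section
/- Let B = (ξ_0,…,ξ_{n−1}) be a basis of F_{2^n} over F_2; for x ∈ F_{2^n} write x = Σ_i x_i ξ_i with coordinates x_i ∈ {0,1} regarded as elements of F_{2^n}. Define x ⊙_B y := Σ_i x_i y_i ξ_i and μ_B(x) := Σ_{i<j} x_i x_j ξ_i ξ_j. Let h : F_{2^n} → F_{2^n} be any function and set f_B(x) := h(x)² + μ_B(x). Then (i) for all a, x ∈ F_{2^n}, f_B(x+a) + f_B(x) + f_B(a) + xa = (h(x+a) + h(x) + h(a) + x ⊙_B a)²; and consequently (ii) the map x ↦ h(x+a) + h(x) + x ⊙_B a is a bijection of F_{2^n} for every a ≠ 0 if and only if f_B is planar. -/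
open Function

open Finset in
lemma split3 {n : ℕ} {K : Type*} [AddCommMonoid K] (f : Fin n × Fin n → K) :
    ∑ p : Fin n × Fin n, f p
    = (∑ p ∈ Finset.univ.filter (fun p : Fin n × Fin n => p.1 < p.2), f p)
      + (∑ p ∈ Finset.univ.filter (fun p : Fin n × Fin n => p.1 = p.2), f p)
      + (∑ p ∈ Finset.univ.filter (fun p : Fin n × Fin n => p.2 < p.1), f p) := by
  classical
  rw [← Finset.sum_filter_add_sum_filter_not Finset.univ (fun p : Fin n × Fin n => p.1 < p.2) f]
  rw [← Finset.sum_filter_add_sum_filter_not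
    (Finset.univ.filter (fun p : Fin n × Fin n => ¬ p.1 < p.2))
    (fun p : Fin n × Fin n => p.1 = p.2) f]
  rw [Finset.filter_filter, Finset.filter_filter, add_assoc]
  congr 2
  · refine Finset.sum_congr ?_ fun _ _ => rfl
    ext p; simp only [Finset.mem_filter, Finset.mem_univ, true_and, Fin.lt_def, Fin.ext_iff]
    omega
  · refine Finset.sum_congr ?_ fun _ _ => rfl
    ext p; simp only [Finset.mem_filter, Finset.mem_univ, true_and, Fin.lt_def, Fin.ext_iff]
    omega

lemma keyA {n : ℕ} (B : Module.Basis (Fin n) (ZMod 2) (GaloisField 2 n)) (x a : GaloisField 2 n) :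
    (∑ p ∈ Finset.univ.filter (fun p : Fin n × Fin n => p.1 < p.2),
        (B.repr (x+a) p.1 * B.repr (x+a) p.2) • (B p.1 * B p.2))
    + (∑ p ∈ Finset.univ.filter (fun p : Fin n × Fin n => p.1 < p.2),
        (B.repr x p.1 * B.repr x p.2) • (B p.1 * B p.2))
    + (∑ p ∈ Finset.univ.filter (fun p : Fin n × Fin n => p.1 < p.2),
        (B.repr a p.1 * B.repr a p.2) • (B p.1 * B p.2))
    + x * a
    = (∑ i, (B.repr x i * B.repr a i) • B i) ^ 2 := by
  classical
  set u : Fin n → ZMod 2 := fun i => B.repr x i with hu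
  set v : Fin n → ZMod 2 := fun i => B.repr a i with hv
  have hrepr : ∀ i, B.repr (x + a) i = u i + v i := by intro i; simp [hu, hv]
  set sl := Finset.univ.filter (fun p : Fin n × Fin n => p.1 < p.2) with hsl
  have hz : ∀ p q r s : ZMod 2, (p+q)*(r+s)+p*r+q*s = p*s+q*r := by decide
  have step1 :
      (∑ p ∈ sl, (B.repr (x+a) p.1 * B.repr (x+a) p.2) • (B p.1 * B p.2))
      + (∑ p ∈ sl, (u p.1 * u p.2) • (B p.1 * B p.2))
      + (∑ p ∈ sl, (v p.1 * v p.2) • (B p.1 * B p.2))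
      = (∑ p ∈ sl, (u p.1 * v p.2) • (B p.1 * B p.2))
        + (∑ p ∈ sl, (u p.2 * v p.1) • (B p.1 * B p.2)) := by
    rw [← Finset.sum_add_distrib, ← Finset.sum_add_distrib, ← Finset.sum_add_distrib]
    refine Finset.sum_congr rfl fun p _ => ?_
    rw [hrepr, hrepr, ← add_smul, ← add_smul, ← add_smul, hz, mul_comm (v p.1) (u p.2)]
  have step2 : x * a = ∑ p : Fin n × Fin n, (u p.1 * v p.2) • (B p.1 * B p.2) := by
    conv_lhs => rw [← B.sum_repr x, ← B.sum_repr a]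
    rw [Finset.sum_mul_sum, ← Finset.univ_product_univ, Finset.sum_product]
    exact Finset.sum_congr rfl fun i _ => Finset.sum_congr rfl fun j _ =>
      smul_mul_smul_comm _ _ _ _
  have step3 : (∑ p ∈ Finset.univ.filter (fun p : Fin n × Fin n => p.2 < p.1),
      (u p.1 * v p.2) • (B p.1 * B p.2))
      = ∑ p ∈ sl, (u p.2 * v p.1) • (B p.1 * B p.2) := by
    refine Finset.sum_nbij' (fun p => (p.2, p.1)) (fun p => (p.2, p.1)) ?_ ?_ ?_ ?_ ?_
    · intro p hp; simp only [hsl, Finset.mem_filter, Finset.mem_univ, true_and] at hp ⊢; exact hp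
    · intro p hp; simp only [hsl, Finset.mem_filter, Finset.mem_univ, true_and] at hp ⊢; exact hp
    · intro p _; rfl
    · intro p _; rfl
    · intro p _; simp [mul_comm (B p.1) (B p.2)]
  have step4 : (∑ p ∈ Finset.univ.filter (fun p : Fin n × Fin n => p.1 = p.2),
      (u p.1 * v p.2) • (B p.1 * B p.2))
      = ∑ i, (u i * v i) • (B i * B i) := by
    refine (Finset.sum_nbij' (fun p : Fin n × Fin n => p.1) (fun i => (i, i)) ?_ ?_ ?_ ?_ ?_)
    · intro p hp; exact Finset.mem_univ _
    · intro i _; simp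
    · intro p hp; simp only [Finset.mem_filter, Finset.mem_univ, true_and] at hp
      exact Prod.ext rfl hp
    · intro i _; rfl
    · intro p hp; simp only [Finset.mem_filter, Finset.mem_univ, true_and] at hp
      rw [← hp]
  have hcc : ∀ c : ZMod 2, c * c = c := by decide
  have rhs : (∑ i, (u i * v i) • B i) ^ 2 = ∑ i, (u i * v i) • (B i * B i) := by
    rw [CharTwo.sum_sq]
    refine Finset.sum_congr rfl fun i _ => ?_
    rw [sq, smul_mul_smul_comm, hcc]
  rw [step2, split3, step3, step4, rhs]
  rw [step1]
  have hxyd : ∀ X Y D : GaloisField 2 n, X + Y + (X + D + Y) = D := fun X Y D => by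
    linear_combination (X + Y) * (CharTwo.two_eq_zero (R := GaloisField 2 n))
  exact hxyd _ _ _

/-- `f` is a planar function on a field of characteristic 2:
for every `a ≠ 0` the map `x ↦ f(x+a) + f(x) + ax` is a bijection. -/
def IsPlanar {F : Type*} [Field F] (f : F → F) : Prop :=
  ∀ a : F, a ≠ 0 → Bijective (fun x => f (x + a) + f x + a * x)

/-- with `B` a basis of F_{2ⁿ} over F₂, `x ⊙_B y = Σ xᵢyᵢξᵢ`,
`μ_B(x) = Σ_{i<j} xᵢxⱼξᵢξⱼ` and `f_B(x) = h(x)² + μ_B(x)`, we have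
(i) `f_B(x+a) + f_B(x) + f_B(a) + xa = (h(x+a) + h(x) + h(a) + x ⊙_B a)²`, and
(ii) `x ↦ h(x+a) + h(x) + x ⊙_B a` is bijective for all `a ≠ 0` iff `f_B` is planar. -/
theorem stmt1 (n : ℕ) (hn : 0 < n)
    (B : Module.Basis (Fin n) (ZMod 2) (GaloisField 2 n))
    (h : GaloisField 2 n → GaloisField 2 n)
    (odotB : GaloisField 2 n → GaloisField 2 n → GaloisField 2 n)
    (hodotB : ∀ x y, odotB x y = ∑ i, (B.repr x i * B.repr y i) • B i)
    (muB : GaloisField 2 n → GaloisField 2 n)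
    (hmuB : ∀ x, muB x =
      ∑ p ∈ Finset.univ.filter (fun p : Fin n × Fin n => p.1 < p.2),
        (B.repr x p.1 * B.repr x p.2) • (B p.1 * B p.2))
    (fB : GaloisField 2 n → GaloisField 2 n)
    (hfB : ∀ x, fB x = h x ^ 2 + muB x) :
    (∀ a x : GaloisField 2 n,
        fB (x + a) + fB x + fB a + x * a
          = (h (x + a) + h x + h a + odotB x a) ^ 2) ∧
    ((∀ a : GaloisField 2 n, a ≠ 0 →
        Bijective (fun x => h (x + a) + h x + odotB x a)) ↔ IsPlanar fB) := by

  have h2 : (2 : GaloisField 2 n) = 0 := CharTwo.two_eq_zero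
  have eq1 : ∀ a x : GaloisField 2 n,
      fB (x + a) + fB x + fB a + x * a
        = (h (x + a) + h x + h a + odotB x a) ^ 2 := by
    intro a x
    have hA := keyA B x a
    rw [← hmuB (x+a), ← hmuB x, ← hmuB a] at hA
    rw [hfB, hfB, hfB, hodotB]
    rw [CharTwo.add_sq (h (x+a) + h x + h a), CharTwo.add_sq (h (x+a) + h x),
      CharTwo.add_sq (h (x+a))]
    linear_combination hA
  refine ⟨eq1, ?_⟩
  have keyB : ∀ a x : GaloisField 2 n,
      fB (x + a) + fB x + a * x
        = ((h (x + a) + h x + odotB x a) + h a) ^ 2 + fB a := by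
    intro a x
    have := eq1 a x
    linear_combination this - fB a * h2
  have hsq : Bijective (fun y : GaloisField 2 n => y ^ 2) := by
    apply Finite.injective_iff_bijective.mp
    intro y z hyz
    exact (frobenius (GaloisField 2 n) 2).injective (by simpa [frobenius_def] using hyz)
  have houter : ∀ a : GaloisField 2 n,
      Bijective (fun y : GaloisField 2 n => (y + h a) ^ 2 + fB a) := by
    intro a
    have : (fun y : GaloisField 2 n => (y + h a) ^ 2 + fB a)
        = (fun z => z + fB a) ∘ (fun y => y ^ 2) ∘ (fun y => y + h a) := rfl
    rw [this]
    exact (Equiv.addRight (fB a)).bijective.comp (hsq.comp (Equiv.addRight (h a)).bijective)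
  have hequiv : ∀ a : GaloisField 2 n,
      Bijective (fun x => fB (x + a) + fB x + a * x)
        ↔ Bijective (fun x => h (x + a) + h x + odotB x a) := by
    intro a
    have hfun : (fun x => fB (x + a) + fB x + a * x)
        = (fun y : GaloisField 2 n => (y + h a) ^ 2 + fB a)
          ∘ (fun x => h (x + a) + h x + odotB x a) := funext fun x => keyB a x
    rw [hfun]
    exact (houter a).of_comp_iff' _
  constructor
  · intro H a ha; exact (hequiv a).mpr (H a ha)
  · intro H a ha; exact (hequiv a).mp (H a ha)
end

section
/- Let D_1, D_2 ⊆ (Z/4)^n be (2^n,2^n,2^n,1)-relative difference sets relative to 2(Z/4)^n, with F_2^n-representations h_1, h_2 satisfying h_1(0) = h_2(0) = 0. Let M : F_2^n → F_2^n be an F_2-linear bijection with matrix U ∈ M_n(F_2). Then the following are equivalent: (i) there exists L ∈ M_n(Z/4) whose reduction modulo 2 equals U and such that ρ(L)(D_1) = D_2; (ii) M(x) *_{h_2} M(y) = M(x *_{h_1} y) for all x, y ∈ F_2^n. -/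
open Function

/-- The multiplication `x *_h y := h(x+y) + h(x) + h(y) + x ⊙ y` on F₂ⁿ. -/
def starMul {n : ℕ} (h : (Fin n → ZMod 2) → (Fin n → ZMod 2))
    (x y : Fin n → ZMod 2) : Fin n → ZMod 2 :=
  h (x + y) + h x + h y + odot x y

namespace RDSAux

def lo : ZMod 4 → ZMod 2 := fun v => (v.val : ZMod 2)
def hi : ZMod 4 → ZMod 2 := fun v => ((v.val / 2 : ℕ) : ZMod 2)

lemma lo_cast : ∀ v : ZMod 4, ZMod.castHom (by norm_num : (2:ℕ) ∣ 4) (ZMod 2) v = lo v := by decide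
lemma lo_psi : ∀ a : ZMod 2, lo (psi a) = a := by decide
lemma lo_add : ∀ a b : ZMod 4, lo (a+b) = lo a + lo b := by decide
lemma lo_mul : ∀ a b : ZMod 4, lo (a*b) = lo a * lo b := by decide
lemma hi_add : ∀ a b : ZMod 4, hi (a+b) = hi a + hi b + lo a * lo b := by decide
lemma hi_two : ∀ a : ZMod 4, hi (2*a) = lo a := by decide
lemma lo_two : ∀ a : ZMod 4, lo (2*a) = 0 := by decide
lemma decomp : ∀ v : ZMod 4, psi (lo v) + 2 * psi (hi v) = v := by decide
lemma psi_addS : ∀ a b : ZMod 2, psi (a+b) = psi a + psi b + 2 * psi (a*b) := by decide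
lemma two_psi_eq : ∀ v : ZMod 4, 2 * v = 2 * psi (lo v) := by decide
lemma lo_psi2 : ∀ a b : ZMod 2, lo (psi a + 2 * psi b) = a := by decide
lemma hi_psi2 : ∀ a b : ZMod 2, hi (psi a + 2 * psi b) = b := by decide
lemma two_psi_add : ∀ a b : ZMod 2, 2 * psi a + 2 * psi b = 2 * psi (a+b) := by decide

lemma assoc_two_psi {n : ℕ} (a b b' : Fin n → ZMod 2) :
    Psi a + 2 * Psi b + 2 * Psi b' = Psi a + 2 * Psi (b + b') := by
  funext i
  show psi _ + 2 * psi _ + 2 * psi _ = psi _ + 2 * psi (_ + _)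
  rw [add_assoc, two_psi_add]

def lov {n : ℕ} (v : Fin n → ZMod 4) : Fin n → ZMod 2 := fun i => lo (v i)
def hiv {n : ℕ} (v : Fin n → ZMod 4) : Fin n → ZMod 2 := fun i => hi (v i)

/-- lo as an AddMonoidHom for map_sum -/
def loA : ZMod 4 →+ ZMod 2 := AddMonoidHom.mk' lo (by decide)

variable {n : ℕ}

lemma lov_mulVec (L : Matrix (Fin n) (Fin n) (ZMod 4)) (v : Fin n → ZMod 4) :
    lov (L.mulVec v) = (L.map lo).mulVec (lov v) := by
  funext i
  show lo (∑ j, L i j * v j) = ∑ j, lo (L i j) * lo (v j)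
  rw [show lo (∑ j, L i j * v j) = loA (∑ j, L i j * v j) from rfl, map_sum]
  exact Finset.sum_congr rfl fun j _ => lo_mul _ _

lemma lov_psi2 (d e : Fin n → ZMod 2) : lov (Psi d + 2 * Psi e) = d := by
  funext i; exact lo_psi2 (d i) (e i)

lemma hiv_psi2 (d e : Fin n → ZMod 2) : hiv (Psi d + 2 * Psi e) = e := by
  funext i; exact hi_psi2 (d i) (e i)

lemma lov_Psi (d : Fin n → ZMod 2) : lov (Psi d) = d := by
  funext i; exact lo_psi (d i)

lemma decomp_vec (v : Fin n → ZMod 4) : Psi (lov v) + 2 * Psi (hiv v) = v := by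
  funext i; exact decomp (v i)

lemma psi2_inj {d e d' e' : Fin n → ZMod 2}
    (h : Psi d + 2 * Psi e = Psi d' + 2 * Psi e') : d = d' ∧ e = e' := by
  constructor
  · rw [← lov_psi2 d e, h, lov_psi2]
  · rw [← hiv_psi2 d e, h, hiv_psi2]

section Lift
variable {L : Matrix (Fin n) (Fin n) (ZMod 4)} {U : Matrix (Fin n) (Fin n) (ZMod 2)}
variable (hL : L.map lo = U)

include hL

lemma lov_L (v : Fin n → ZMod 4) : lov (L.mulVec v) = U.mulVec (lov v) := by
  rw [lov_mulVec, hL]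

lemma lift_mulVec_psi (d : Fin n → ZMod 2) :
    L.mulVec (Psi d) = Psi (U.mulVec d) + 2 * Psi (hiv (L.mulVec (Psi d))) := by
  conv_lhs => rw [← decomp_vec (L.mulVec (Psi d))]
  rw [lov_L hL, lov_Psi]

lemma lift_two_psi (e : Fin n → ZMod 2) :
    L.mulVec (2 * Psi e) = 2 * Psi (U.mulVec e) := by
  have h1 : (2 : Fin n → ZMod 4) * Psi e = (2 : ZMod 4) • Psi e := by
    funext i; simp [Pi.smul_apply, smul_eq_mul]
  rw [h1, Matrix.mulVec_smul]
  funext i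
  show (2:ZMod 4) * (L.mulVec (Psi e)) i = 2 * psi ((U.mulVec e) i)
  rw [two_psi_eq]
  congr 1
  have := congrFun (lov_L hL (Psi e)) i
  rw [lov_Psi] at this
  exact congrArg psi this

lemma lift_mulVec_elt (d e : Fin n → ZMod 2) :
    L.mulVec (Psi d + 2 * Psi e)
      = Psi (U.mulVec d) + 2 * Psi (hiv (L.mulVec (Psi d)) + U.mulVec e) := by
  rw [Matrix.mulVec_add, lift_two_psi hL]
  conv_lhs => rw [lift_mulVec_psi hL]
  funext i
  show psi _ + 2 * psi _ + 2 * psi _ = psi _ + 2 * psi (_ + _)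
  rw [add_assoc, two_psi_add]

lemma theta_polar (x y : Fin n → ZMod 2) :
    hiv (L.mulVec (Psi (x + y)))
      = hiv (L.mulVec (Psi x)) + hiv (L.mulVec (Psi y))
        + U.mulVec x * U.mulVec y + U.mulVec (x * y) := by
  have hxy : Psi (x + y) = (Psi x + Psi y) + 2 * Psi (x * y) := by
    funext i
    show psi (x i + y i) = psi (x i) + psi (y i) + 2 * psi (x i * y i)
    exact psi_addS _ _
  rw [hxy, Matrix.mulVec_add, Matrix.mulVec_add, lift_two_psi hL]
  funext i
  set A := L.mulVec (Psi x) with hA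
  set B := L.mulVec (Psi y) with hB
  show hi ((A i + B i) + 2 * psi ((U.mulVec (x*y)) i))
      = hi (A i) + hi (B i) + (U.mulVec x) i * (U.mulVec y) i + (U.mulVec (x*y)) i
  rw [hi_add, hi_two, lo_two, lo_psi, hi_add, mul_zero, add_zero]
  have hax : lo (A i) = (U.mulVec x) i := by
    have := congrFun (lov_L hL (Psi x)) i; rw [lov_Psi] at this; exact this
  have hay : lo (B i) = (U.mulVec y) i := by
    have := congrFun (lov_L hL (Psi y)) i; rw [lov_Psi] at this; exact this
  rw [hax, hay]

end Lift

lemma map2psi_mulVec (V : Matrix (Fin n) (Fin n) (ZMod 2)) (d : Fin n → ZMod 2) :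
    (V.map (fun b => 2 * psi b)).mulVec (Psi d) = 2 * Psi (V.mulVec d) := by
  have hmap : (V.map psi).map lo = V := by
    funext i j; exact lo_psi (V i j)
  funext i
  show (∑ j, (2 * psi (V i j)) * psi (d j)) = 2 * psi ((V.mulVec d) i)
  have : (∑ j, (2 * psi (V i j)) * psi (d j)) = 2 * ∑ j, psi (V i j) * psi (d j) := by
    rw [Finset.mul_sum]; exact Finset.sum_congr rfl fun j _ => by ring
  rw [this, two_psi_eq]
  congr 1
  have := congrFun (lov_mulVec (V.map psi) (Psi d)) i
  rw [hmap, lov_Psi] at this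
  show psi (lo ((V.map psi).mulVec (Psi d) i)) = psi ((V.mulVec d) i)
  exact congrArg psi this

lemma char2_vec : (2 : Fin n → ZMod 2) = 0 := by
  funext i; show (2 : ZMod 2) = 0; decide

lemma eq_iff_add_eq_zero (a b : Fin n → ZMod 2) : a = b ↔ a + b = 0 := by
  constructor
  · rintro rfl; funext i; show a i + a i = 0; revert a; intro a
    have : ∀ c : ZMod 2, c + c = 0 := by decide
    exact this _
  · intro h
    have : ∀ c d : ZMod 2, c + d = 0 → c = d := by decide
    funext i; exact this _ _ (congrFun h i)

/-- an additive map F₂ⁿ → F₂ⁿ is given by a matrix -/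
lemma exists_mat_iff (g : (Fin n → ZMod 2) → (Fin n → ZMod 2)) :
    (∃ B : Matrix (Fin n) (Fin n) (ZMod 2), ∀ d, B.mulVec d = g d) ↔
    ∀ x y, g (x + y) = g x + g y := by
  constructor
  · rintro ⟨B, hB⟩ x y
    rw [← hB, ← hB, ← hB, Matrix.mulVec_add]
  · intro hadd
    have g0 : g 0 = 0 := by
      have := hadd 0 0
      simp only [add_zero] at this
      exact (left_eq_add.mp this)
    have hzo : ∀ c : ZMod 2, c = 0 ∨ c = 1 := by decide
    have hsmul : ∀ (c : ZMod 2) (x : Fin n → ZMod 2), g (c • x) = c • g x := by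
      intro c x
      rcases hzo c with rfl | rfl
      · simp [g0]
      · simp
    let f : (Fin n → ZMod 2) →ₗ[ZMod 2] (Fin n → ZMod 2) :=
      { toFun := g, map_add' := hadd, map_smul' := hsmul }
    refine ⟨LinearMap.toMatrix' f, fun d => ?_⟩
    rw [← Matrix.toLin'_apply, Matrix.toLin'_toMatrix']
    rfl

end RDSAux

open RDSAux in
/-- for RDSs `D₁, D₂` with F₂ⁿ-representations `h₁, h₂` vanishing
at 0, and an F₂-linear bijection `M = U·(-)`, there is `L ∈ Mₙ(ℤ/4)` with
`L mod 2 = U` and `ρ(L)(D₁) = D₂` iff `M(x) *_{h₂} M(y) = M(x *_{h₁} y)`. -/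
theorem stmt4 (n : ℕ) (hn : 0 < n)
    (h₁ h₂ : (Fin n → ZMod 2) → (Fin n → ZMod 2))
    (hh₁ : h₁ 0 = 0) (hh₂ : h₂ 0 = 0)
    (D₁ D₂ : Set (Fin n → ZMod 4))
    (hD₁ : D₁ = {ξ | ∃ d : Fin n → ZMod 2, ξ = Psi d + 2 * Psi (h₁ d)})
    (hD₂ : D₂ = {ξ | ∃ d : Fin n → ZMod 2, ξ = Psi d + 2 * Psi (h₂ d)})
    (hRDS₁ : IsRDS n D₁) (hRDS₂ : IsRDS n D₂)
    (U : Matrix (Fin n) (Fin n) (ZMod 2))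
    (M : (Fin n → ZMod 2) → (Fin n → ZMod 2))
    (hM : ∀ x, M x = U.mulVec x)
    (hMbij : Bijective M) :
    (∃ L : Matrix (Fin n) (Fin n) (ZMod 4),
        L.map (ZMod.castHom (by norm_num : (2 : ℕ) ∣ 4) (ZMod 2)) = U ∧
        (fun v => L.mulVec v) '' D₁ = D₂) ↔
    (∀ x y : Fin n → ZMod 2, starMul h₂ (M x) (M y) = M (starMul h₁ x y)) := by
  have h2v : (2 : Fin n → ZMod 2) = 0 := char2_vec
  have hodot : ∀ x y : Fin n → ZMod 2, odot x y = x * y := fun _ _ => rfl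
  have hL₀ : (U.map psi).map lo = U := by
    ext i j
    exact lo_psi (U i j)
  constructor
  · rintro ⟨L, hLU, himg⟩ x y
    have hL : L.map lo = U := by
      rw [← hLU]
      ext i j
      exact (lo_cast (L i j)).symm
    have hφ : ∀ d, hiv (L.mulVec (Psi d)) + U.mulVec (h₁ d) = h₂ (U.mulVec d) := by
      intro d
      have hmem : L.mulVec (Psi d + 2 * Psi (h₁ d)) ∈ D₂ := by
        rw [← himg]
        exact ⟨Psi d + 2 * Psi (h₁ d), by rw [hD₁]; exact ⟨d, rfl⟩, rfl⟩
      rw [hD₂] at hmem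
      obtain ⟨e, he⟩ := hmem
      rw [lift_mulVec_elt hL] at he
      obtain ⟨he1, he2⟩ := psi2_inj he
      rw [he2, ← he1]
    rw [hM, hM, hM]
    simp only [starMul, hodot, Matrix.mulVec_add]
    rw [show U.mulVec x + U.mulVec y = U.mulVec (x + y) from (Matrix.mulVec_add U x y).symm,
      ← hφ (x + y), ← hφ x, ← hφ y, theta_polar hL x y]
    linear_combination (hiv (L.mulVec (Psi x)) + hiv (L.mulVec (Psi y))
      + U.mulVec x * U.mulVec y) * h2v
  · intro hstar
    have hgadd : ∀ x y : Fin n → ZMod 2,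
        (h₂ (U.mulVec (x + y)) + hiv ((U.map psi).mulVec (Psi (x + y))) + U.mulVec (h₁ (x + y)))
          = (h₂ (U.mulVec x) + hiv ((U.map psi).mulVec (Psi x)) + U.mulVec (h₁ x))
            + (h₂ (U.mulVec y) + hiv ((U.map psi).mulVec (Psi y)) + U.mulVec (h₁ y)) := by
      intro x y
      have h := hstar x y
      rw [hM, hM, hM] at h
      simp only [starMul, hodot, Matrix.mulVec_add] at h
      rw [theta_polar hL₀ x y, Matrix.mulVec_add]
      linear_combination h + (U.mulVec (x * y) + U.mulVec (h₁ (x + y))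
        - h₂ (U.mulVec x) - h₂ (U.mulVec y)) * h2v
    obtain ⟨B, hB⟩ := (exists_mat_iff
      (fun d => h₂ (U.mulVec d) + hiv ((U.map psi).mulVec (Psi d)) + U.mulVec (h₁ d))).mpr
      (fun x y => hgadd x y)
    have hL : (U.map psi + B.map (fun b => 2 * psi b)).map lo = U := by
      ext i j
      show lo ((U.map psi) i j + (B.map (fun b => 2 * psi b)) i j) = U i j
      exact lo_psi2 (U i j) (B i j)
    have hθ : ∀ d, hiv ((U.map psi + B.map (fun b => 2 * psi b)).mulVec (Psi d))
        = hiv ((U.map psi).mulVec (Psi d)) + B.mulVec d := by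
      intro d
      rw [Matrix.add_mulVec, map2psi_mulVec]
      conv_lhs => rw [lift_mulVec_psi hL₀]
      rw [assoc_two_psi, hiv_psi2]
    have key : ∀ d, (U.map psi + B.map (fun b => 2 * psi b)).mulVec (Psi d + 2 * Psi (h₁ d))
        = Psi (U.mulVec d) + 2 * Psi (h₂ (U.mulVec d)) := by
      intro d
      have hBd : B.mulVec d
          = h₂ (U.mulVec d) + hiv ((U.map psi).mulVec (Psi d)) + U.mulVec (h₁ d) := hB d
      have hd : hiv ((U.map psi).mulVec (Psi d)) + B.mulVec d + U.mulVec (h₁ d)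
          = h₂ (U.mulVec d) := by
        linear_combination hBd + (hiv ((U.map psi).mulVec (Psi d)) + U.mulVec (h₁ d)) * h2v
      rw [lift_mulVec_elt hL, hθ, hd]
    refine ⟨U.map psi + B.map (fun b => 2 * psi b), ?_, ?_⟩
    · ext i j
      show ZMod.castHom (by norm_num : (2:ℕ) ∣ 4) (ZMod 2) ((U.map psi) i j + (B.map (fun b => 2 * psi b)) i j) = U i j
      rw [lo_cast]
      exact lo_psi2 (U i j) (B i j)
    · rw [hD₂]
      ext v
      constructor
      · rintro ⟨w, hw, rfl⟩
        rw [hD₁] at hw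
        obtain ⟨d, rfl⟩ := hw
        exact ⟨U.mulVec d, key d⟩
      · rintro ⟨e, rfl⟩
        obtain ⟨x, hx⟩ := hMbij.2 e
        rw [hM] at hx
        refine ⟨Psi x + 2 * Psi (h₁ x), by rw [hD₁]; exact ⟨x, rfl⟩, ?_⟩
        show (U.map psi + B.map (fun b => 2 * psi b)).mulVec (Psi x + 2 * Psi (h₁ x)) = _
        rw [key x, hx]
end

section
/- Let h : F_2^n → F_2^n satisfy h(0) = 0 and suppose that for every a ≠ 0 the map Δ_{h,a}(d) = h(d+a) + h(d) + d ⊙ a is a bijection of F_2^n. Then (F_2^n, +, *_h) is a commutative presemifield if and only if h(x+y+z) + h(x+y) + h(x+z) + h(y+z) + h(x) + h(y) + h(z) = 0 for all x, y, z ∈ F_2^n. -/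
open Function

/-- `(α, +, mul)` is a finite commutative presemifield: `mul` is commutative,
distributes over `+` on both sides, and has no zero divisors. -/
def IsCommPresemifield {α : Type*} [AddCommGroup α] (mul : α → α → α) : Prop :=
  (∀ x y, mul x y = mul y x) ∧
  (∀ x y z, mul x (y + z) = mul x y + mul x z) ∧
  (∀ x y z, mul (x + y) z = mul x z + mul y z) ∧
  (∀ x y, mul x y = 0 → x = 0 ∨ y = 0)

/-- if `h(0) = 0` and `Δ_{h,a}` is bijective for all `a ≠ 0`, then
`(F₂ⁿ, +, *_h)` is a commutative presemifield iff
`h(x+y+z) + h(x+y) + h(x+z) + h(y+z) + h(x) + h(y) + h(z) = 0` for all `x,y,z`. -/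
theorem stmt5 (n : ℕ) (hn : 0 < n)
    (h : (Fin n → ZMod 2) → (Fin n → ZMod 2)) (h0 : h 0 = 0)
    (hbij : ∀ a : Fin n → ZMod 2, a ≠ 0 →
      Bijective (fun d : Fin n → ZMod 2 => h (d + a) + h d + odot d a)) :
    IsCommPresemifield (starMul h) ↔
    (∀ x y z : Fin n → ZMod 2,
      h (x + y + z) + h (x + y) + h (x + z) + h (y + z) + h x + h y + h z = 0) := by
  have two : (2 : Fin n → ZMod 2) = 0 := by
    funext i; exact (by decide : (2 : ZMod 2) = 0)
  have od : ∀ x y : Fin n → ZMod 2, odot x y = x * y := fun _ _ => rfl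
  constructor
  · rintro ⟨_, hd, _, _⟩ x y z
    have key := hd x y z
    simp only [starMul, od, ← add_assoc] at key
    linear_combination key + (h (x+y) + h (x+z) + h x + h y + h z) * two
  · intro E
    refine ⟨?_, ?_, ?_, ?_⟩
    · intro x y
      simp only [starMul, od, add_comm x y, mul_comm x y]
      ring
    · intro x y z
      simp only [starMul, od, ← add_assoc]
      linear_combination E x y z - (h (x+y) + h (x+z) + h x + h y + h z) * two
    · intro x y z
      simp only [starMul, od]
      linear_combination E x y z - (h (x+z) + h (y+z) + h x + h y + h z) * two
    · intro x y hxy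
      by_cases hy : y = 0
      · exact Or.inr hy
      · refine Or.inl ?_
        have hinj := (hbij y hy).injective
        have e1 : h (x + y) + h x + odot x y = h (0 + y) + h 0 + odot 0 y := by
          simp only [starMul, od] at hxy
          have o0 : odot 0 y = 0 := by funext i; simp [odot]
          rw [zero_add, h0, o0, add_zero, add_zero]
          simp only [od]
          linear_combination hxy - h y * two
        exact hinj e1
end

section
/- Let f ∈ F_{2^n}[x] be a reduced polynomial (degree < 2^n) with no constant term and no monomials of the form u·x^{2^i}, inducing the function f : F_{2^n} → F_{2^n}. Then f(x+y+z) + f(x+y) + f(x+z) + f(y+z) + f(x) + f(y) + f(z) = 0 for all x, y, z ∈ F_{2^n} if and only if f is a Dembowski–Ostrom polynomial, i.e. every monomial of f has exponent of the form 2^i + 2^j with 0 ≤ i < j ≤ n−1. -/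
open Polynomial

private lemma cast_of_odd {F : Type*} [Field F] [CharP F 2] {m : ℕ} (h : m % 2 = 1) :
    (m : F) = 1 := by
  have hm : m = 2 * (m / 2) + m % 2 := (Nat.div_add_mod m 2).symm
  rw [hm, h]
  push_cast
  rw [CharTwo.two_eq_zero]
  ring

private lemma choose_two_pow_mod (s : ℕ) : ∀ m : ℕ, m.choose (2 ^ s) % 2 = m / 2 ^ s % 2 := by
  induction s with
  | zero => intro m; simp [Nat.choose_one_right]
  | succ s ih =>
    intro m
    have h := @Choose.choose_modEq_choose_mod_mul_choose_div_nat m (2 ^ (s + 1)) 2 ⟨Nat.prime_two⟩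
    have h1 : 2 ^ (s + 1) % 2 = 0 := by
      rw [pow_succ]; exact Nat.mul_mod_left _ _
    have h2 : 2 ^ (s + 1) / 2 = 2 ^ s := by
      rw [pow_succ]; exact Nat.mul_div_cancel _ (by norm_num)
    rw [Nat.ModEq, h1, h2, Nat.choose_zero_right, one_mul] at h
    rw [h, ih (m / 2), Nat.div_div_eq_div_mul, ← pow_succ']

private lemma div_mod_helper (s d : ℕ) (hd : 2 ^ (s + 1) ∣ d) : (2 ^ s + d) / 2 ^ s % 2 = 1 := by
  obtain ⟨e, rfl⟩ := hd
  have h : 2 ^ (s + 1) * e = 2 ^ s * (2 * e) := by ring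
  rw [h, Nat.add_mul_div_left _ _ (by positivity), Nat.div_self (by positivity)]
  omega

private lemma dvd_sum_pows (m : ℕ) : ∀ L : List ℕ, (∀ x ∈ L, m ≤ x) →
    2 ^ m ∣ (L.map (fun i => 2 ^ i)).sum := by
  intro L
  induction L with
  | nil => simp
  | cons a L ih =>
    intro h
    simp only [List.map_cons, List.sum_cons]
    exact dvd_add (pow_dvd_pow 2 (h a (by simp))) (ih fun x hx => h x (by simp [hx]))

private lemma mono_identity {F : Type*} [Field F] [CharP F 2] (x y z : F) (i j : ℕ) :
    (x + y + z) ^ (2 ^ i + 2 ^ j) + (x + y) ^ (2 ^ i + 2 ^ j) + (x + z) ^ (2 ^ i + 2 ^ j)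
      + (y + z) ^ (2 ^ i + 2 ^ j) + x ^ (2 ^ i + 2 ^ j) + y ^ (2 ^ i + 2 ^ j)
      + z ^ (2 ^ i + 2 ^ j) = 0 := by
  have h2 : (2 : F) = 0 := CharTwo.two_eq_zero
  have frob : ∀ (u v : F) (m : ℕ), (u + v) ^ 2 ^ m = u ^ 2 ^ m + v ^ 2 ^ m := by
    intro u v m; exact add_pow_char_pow ..
  have frob3 : ∀ (u v w : F) (m : ℕ),
      (u + v + w) ^ 2 ^ m = u ^ 2 ^ m + v ^ 2 ^ m + w ^ 2 ^ m := by
    intro u v w m; rw [frob, frob]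
  simp only [pow_add, frob3, frob]
  linear_combination (2 * x ^ (2 ^ i) * x ^ (2 ^ j) + x ^ (2 ^ i) * y ^ (2 ^ j)
    + x ^ (2 ^ i) * z ^ (2 ^ j) + y ^ (2 ^ i) * x ^ (2 ^ j) + 2 * y ^ (2 ^ i) * y ^ (2 ^ j)
    + y ^ (2 ^ i) * z ^ (2 ^ j) + z ^ (2 ^ i) * x ^ (2 ^ j) + z ^ (2 ^ i) * y ^ (2 ^ j)
    + 2 * z ^ (2 ^ i) * z ^ (2 ^ j)) * h2
private lemma key_coeff (n : ℕ) (hn : 0 < n) (f : Polynomial (GaloisField 2 n))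
    (hdeg : f.natDegree < 2 ^ n)
    (h : ∀ x y z : GaloisField 2 n,
      f.eval (x + y + z) + f.eval (x + y) + f.eval (x + z) + f.eval (y + z)
        + f.eval x + f.eval y + f.eval z = 0)
    (a b c : ℕ) (ha : a ≠ 0) (hb : b ≠ 0) (hc : c ≠ 0) :
    (((c + b).choose b : GaloisField 2 n))
      * (((c + b + a).choose a : GaloisField 2 n) * f.coeff (c + b + a)) = 0 := by
  set F := GaloisField 2 n with hF
  letI : Fintype F := Fintype.ofFinite F
  have hcard : Fintype.card F = 2 ^ n := by
    rw [← Nat.card_eq_fintype_card]; exact GaloisField.card 2 n hn.ne'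
  have hzero : ∀ p : F[X], p.natDegree < 2 ^ n → (∀ x : F, p.eval x = 0) → p = 0 := by
    intro p hp hev
    exact p.eq_zero_of_natDegree_lt_card_of_eval_eq_zero (f := (id : F → F))
      Function.injective_id (fun i => hev i) (by rwa [hcard])
  have hmax : ∀ p q : F[X], p.natDegree < 2 ^ n → q.natDegree < 2 ^ n →
      (p + q).natDegree < 2 ^ n := fun p q hp hq =>
    lt_of_le_of_lt (natDegree_add_le _ _) (max_lt hp hq)
  have hCdeg : ∀ u : F, (C u).natDegree < 2 ^ n := fun u => by
    rw [natDegree_C]; positivity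
  have step1 : ∀ y z : F,
      taylor (y + z) f + taylor y f + taylor z f + f
        + C (f.eval (y + z) + f.eval y + f.eval z) = 0 := by
    intro y z
    apply hzero
    · apply hmax _ _ (hmax _ _ (hmax _ _ (hmax _ _ _ _) _) _) (hCdeg _) <;>
        simp [natDegree_taylor, hdeg]
    · intro x
      simp only [eval_add, taylor_eval, eval_C]
      rw [show x + (y + z) = x + y + z from (add_assoc x y z).symm]
      linear_combination h x y z
  set g : F[X] := hasseDeriv a f with hg
  have hgdeg : g.natDegree < 2 ^ n :=
    lt_of_le_of_lt ((f.natDegree_hasseDeriv_le a).trans (Nat.sub_le _ _)) hdeg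
  have step2 : ∀ y z : F, g.eval (y + z) + g.eval y + g.eval z + f.coeff a = 0 := by
    intro y z
    have h1 := congrArg (fun p => coeff p a) (step1 y z)
    simpa [coeff_add, taylor_coeff, coeff_C, ha] using h1
  have step3 : ∀ z : F, taylor z g + g + C (g.eval z + f.coeff a) = 0 := by
    intro z
    apply hzero
    · apply hmax _ _ (hmax _ _ _ _) (hCdeg _) <;> simp [natDegree_taylor, hgdeg]
    · intro y
      simp only [eval_add, taylor_eval, eval_C]
      linear_combination step2 y z
  have step4 : ∀ z : F, (hasseDeriv b g).eval z + g.coeff b = 0 := by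
    intro z
    have h1 := congrArg (fun p => coeff p b) (step3 z)
    simpa [coeff_add, taylor_coeff, coeff_C, hb] using h1
  have step5 : hasseDeriv b g + C (g.coeff b) = 0 := by
    apply hzero
    · apply hmax _ _ _ (hCdeg _)
      exact lt_of_le_of_lt ((g.natDegree_hasseDeriv_le b).trans (Nat.sub_le _ _)) hgdeg
    · intro z
      simp only [eval_add, eval_C]
      exact step4 z
  have h6 := congrArg (fun p => coeff p c) step5
  simp only [coeff_add, coeff_C, hc, if_neg hc, coeff_zero, add_zero] at h6
  rw [hasseDeriv_coeff, hg, hasseDeriv_coeff] at h6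
  push_cast at h6 ⊢
  linear_combination h6

/-- a reduced polynomial `f` over F_{2ⁿ} (degree < 2ⁿ) with no
constant term and no monomials `u·x^{2^i}` satisfies
`f(x+y+z) + f(x+y) + f(x+z) + f(y+z) + f(x) + f(y) + f(z) = 0` for all `x,y,z`
iff `f` is a Dembowski–Ostrom polynomial, i.e. every monomial of `f` has
exponent of the form `2^i + 2^j` with `0 ≤ i < j ≤ n−1`. -/
theorem stmt7 (n : ℕ) (hn : 0 < n) (f : Polynomial (GaloisField 2 n))
    (hdeg : f.natDegree < 2 ^ n)
    (hconst : f.coeff 0 = 0)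
    (hlin : ∀ i : ℕ, f.coeff (2 ^ i) = 0) :
    (∀ x y z : GaloisField 2 n,
      f.eval (x + y + z) + f.eval (x + y) + f.eval (x + z) + f.eval (y + z)
        + f.eval x + f.eval y + f.eval z = 0) ↔
    (∀ k ∈ f.support, ∃ i j : ℕ, i < j ∧ j ≤ n - 1 ∧ k = 2 ^ i + 2 ^ j) := by
  constructor
  · intro h k hk
    have hk0 : f.coeff k ≠ 0 := mem_support_iff.mp hk
    have hkn : k < 2 ^ n := lt_of_le_of_lt (le_natDegree_of_mem_supp k hk) hdeg
    have hsum := Nat.twoPowSum_bitIndices k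
    have hsort : k.bitIndices.Pairwise (· < ·) := Nat.bitIndices_sorted.pairwise
    rcases hL : k.bitIndices with _ | ⟨s, _ | ⟨t, _ | ⟨u, rest⟩⟩⟩ <;> rw [hL] at hsum hsort
    · exfalso
      simp only [List.map_nil, List.sum_nil] at hsum
      exact hk0 (by rw [← hsum]; exact hconst)
    · exfalso
      simp only [List.map_cons, List.map_nil, List.sum_cons, List.sum_nil, add_zero] at hsum
      exact hk0 (by rw [← hsum]; exact hlin s)
    · simp only [List.map_cons, List.map_nil, List.sum_cons, List.sum_nil, add_zero] at hsum
      have hst : s < t := by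
        simp only [List.pairwise_cons, List.mem_cons, List.mem_singleton] at hsort
        exact hsort.1 t (by simp)
      refine ⟨s, t, hst, ?_, hsum.symm⟩
      have h1 : 2 ^ t < 2 ^ n := lt_of_le_of_lt (hsum ▸ Nat.le_add_left _ _) hkn
      have h2 : t < n := (Nat.pow_lt_pow_iff_right (by norm_num)).mp h1
      omega
    · exfalso
      simp only [List.map_cons, List.sum_cons] at hsum
      simp only [List.pairwise_cons, List.mem_cons] at hsort
      set c : ℕ := 2 ^ u + (rest.map (fun i => 2 ^ i)).sum with hc
      have hcpos : c ≠ 0 := by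
        have : 0 < 2 ^ u := by positivity
        omega
      have hkeq : c + 2 ^ t + 2 ^ s = k := by rw [← hsum]; ring
      have key := key_coeff n hn f hdeg h (2 ^ s) (2 ^ t) c
        (by positivity) (by positivity) hcpos
      rw [hkeq] at key
      have hdvd1 : 2 ^ (t + 1) ∣ c := by
        have := dvd_sum_pows (t + 1) (u :: rest) (by
          intro x hx
          exact hsort.2.1 x (by simpa using hx))
        simpa [hc] using this
      have hdvd2 : 2 ^ (s + 1) ∣ 2 ^ t + c := by
        have := dvd_sum_pows (s + 1) (t :: u :: rest) (by
          intro x hx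
          have := hsort.1 x (by simpa using hx)
          omega)
        simpa [hc, add_assoc] using this
      have h1 : ((c + 2 ^ t).choose (2 ^ t) : GaloisField 2 n) = 1 := by
        apply cast_of_odd
        rw [choose_two_pow_mod, show c + 2 ^ t = 2 ^ t + c from by ring]
        exact div_mod_helper t c hdvd1
      have h2 : ((k).choose (2 ^ s) : GaloisField 2 n) = 1 := by
        apply cast_of_odd
        rw [choose_two_pow_mod, ← hsum]
        exact div_mod_helper s (2 ^ t + c) hdvd2
      rw [h1, h2] at key
      rw [one_mul, one_mul] at key
      exact hk0 key
  · intro h x y z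
    have key : ∀ k ∈ Finset.range (f.natDegree + 1),
        f.coeff k * (x + y + z) ^ k + f.coeff k * (x + y) ^ k + f.coeff k * (x + z) ^ k
          + f.coeff k * (y + z) ^ k + f.coeff k * x ^ k + f.coeff k * y ^ k
          + f.coeff k * z ^ k = 0 := by
      intro k _
      by_cases hc : f.coeff k = 0
      · simp [hc]
      · obtain ⟨i, j, hij, hjn, rfl⟩ := h k (mem_support_iff.mpr hc)
        have hm := mono_identity x y z i j
        linear_combination f.coeff (2 ^ i + 2 ^ j) * hm
    rw [eval_eq_sum_range, eval_eq_sum_range, eval_eq_sum_range, eval_eq_sum_range,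
      eval_eq_sum_range, eval_eq_sum_range, eval_eq_sum_range,
      ← Finset.sum_add_distrib, ← Finset.sum_add_distrib, ← Finset.sum_add_distrib,
      ← Finset.sum_add_distrib, ← Finset.sum_add_distrib, ← Finset.sum_add_distrib]
    exact Finset.sum_eq_zero key
end

section
/- Let D_1, D_2 ⊆ (Z/4)^n be (2^n,2^n,2^n,1)-relative difference sets relative to 2(Z/4)^n, both containing 0, whose F_2^n-representations h_1, h_2 satisfy h_i(x+y+z) + h_i(x+y) + h_i(x+z) + h_i(y+z) + h_i(x) + h_i(y) + h_i(z) = 0 for all x, y, z ∈ F_2^n and i = 1, 2 (i.e. both RDSs define commutative semifields). If there exist an automorphism α of the group (Z/4)^n and an element g ∈ (Z/4)^n such that α(D_1) = D_2 + g, then there exists an automorphism β of the group (Z/4)^n such that β(D_1) = D_2. -/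
open Function

namespace Stmt8Aux

/-- reduction mod 2 on one coordinate -/
def cast2 : ZMod 4 → ZMod 2 := fun c => (c.val : ZMod 2)

/-- coordinatewise reduction mod 2 -/
def pr {n : ℕ} (v : Fin n → ZMod 4) : Fin n → ZMod 2 := fun i => cast2 (v i)

lemma cast2_add (x y : ZMod 4) : cast2 (x + y) = cast2 x + cast2 y := by
  revert x y; decide

lemma pr_add {n : ℕ} (v w : Fin n → ZMod 4) : pr (v + w) = pr v + pr w := by
  funext i
  show cast2 (v i + w i) = cast2 (v i) + cast2 (w i)
  exact cast2_add _ _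

lemma addself {n : ℕ} (u : Fin n → ZMod 2) : u + u = 0 := by
  funext i
  show u i + u i = 0
  generalize u i = c
  revert c; decide

lemma twoPsi_add {n : ℕ} (u v : Fin n → ZMod 2) :
    2 * Psi u + 2 * Psi v = 2 * Psi (u + v) := by
  funext i
  show (2 : ZMod 4) * psi (u i) + 2 * psi (v i) = 2 * psi (u i + v i)
  generalize u i = c; generalize v i = d
  revert c d; decide

lemma twoPsi_zero {n : ℕ} : (2 : Fin n → ZMod 4) * Psi (0 : Fin n → ZMod 2) = 0 := by
  funext i
  show (2 : ZMod 4) * psi 0 = 0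
  decide

/-- the correction map attached to an F₂-linear `M` -/
def gammaFun {n : ℕ} (M : (Fin n → ZMod 2) → (Fin n → ZMod 2)) (v : Fin n → ZMod 4) :
    Fin n → ZMod 4 := v + 2 * Psi (M (pr v))

lemma pr_gammaFun {n : ℕ} (M : (Fin n → ZMod 2) → (Fin n → ZMod 2)) (v : Fin n → ZMod 4) :
    pr (gammaFun M v) = pr v := by
  funext i
  show cast2 (v i + 2 * psi (M (pr v) i)) = cast2 (v i)
  generalize v i = c; generalize M (pr v) i = z
  revert c z; decide

lemma gammaFun_invol {n : ℕ} (M : (Fin n → ZMod 2) → (Fin n → ZMod 2)) (v : Fin n → ZMod 4) :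
    gammaFun M (gammaFun M v) = v := by
  show gammaFun M v + 2 * Psi (M (pr (gammaFun M v))) = v
  rw [pr_gammaFun]
  show v + 2 * Psi (M (pr v)) + 2 * Psi (M (pr v)) = v
  rw [add_assoc, twoPsi_add, addself, twoPsi_zero, add_zero]

lemma gammaFun_add {n : ℕ} (M : (Fin n → ZMod 2) → (Fin n → ZMod 2))
    (hM : ∀ y z, M y + M z = M (y + z)) (v w : Fin n → ZMod 4) :
    gammaFun M (v + w) = gammaFun M v + gammaFun M w := by
  unfold gammaFun
  rw [pr_add, ← hM, ← twoPsi_add]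
  abel

/-- the correction automorphism -/
def gammaAut {n : ℕ} (M : (Fin n → ZMod 2) → (Fin n → ZMod 2))
    (hM : ∀ y z, M y + M z = M (y + z)) : AddAut (Fin n → ZMod 4) where
  toFun := gammaFun M
  invFun := gammaFun M
  left_inv := gammaFun_invol M
  right_inv := gammaFun_invol M
  map_add' := gammaFun_add M hM

lemma pr_psi {n : ℕ} (y w : Fin n → ZMod 2) : pr (Psi y + 2 * Psi w) = y := by
  funext i
  show cast2 (psi (y i) + 2 * psi (w i)) = y i
  generalize y i = c; generalize w i = d
  revert c d; decide

lemma gamma_psi {n : ℕ} (M : (Fin n → ZMod 2) → (Fin n → ZMod 2))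
    (y w : Fin n → ZMod 2) :
    gammaFun M (Psi y + 2 * Psi w) = Psi y + 2 * Psi (w + M y) := by
  show Psi y + 2 * Psi w + 2 * Psi (M (pr (Psi y + 2 * Psi w))) = _
  rw [pr_psi, add_assoc, twoPsi_add]

lemma subPsi {n : ℕ} (u v s t : Fin n → ZMod 2) :
    (Psi u + 2 * Psi s) + -(Psi v + 2 * Psi t)
      = Psi (u + v) + 2 * Psi (s + t + (1 + u) * v) := by
  funext i
  show psi (u i) + 2 * psi (s i) + -(psi (v i) + 2 * psi (t i))
      = psi (u i + v i) + 2 * psi (s i + t i + (1 + u i) * v i)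
  generalize u i = c; generalize v i = d; generalize s i = e; generalize t i = f
  revert c d e f; decide

lemma scalar_M_add (A B C D P Q R u v w : ZMod 2)
    (h : A + B + C + D + P + Q + R = 0) :
    (C + P + R + u * w) + (D + Q + R + v * w) = A + B + R + (u + v) * w := by
  revert h; revert A B C D P Q R u v w; decide

lemma scalar_key (p q r u v : ZMod 2) :
    (p + q + (1 + u) * v) + (p + r + q + (u + v) * v) = r := by
  revert p q r u v; decide

end Stmt8Aux

open Stmt8Aux in
/-- if two RDSs `D₁, D₂` containing 0, whose F₂ⁿ-representations
satisfy the commutative-semifield condition, are related by `α(D₁) = D₂ + g`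
for an automorphism `α` of (ℤ/4)ⁿ and some `g`, then `β(D₁) = D₂` for some
automorphism `β` of (ℤ/4)ⁿ. -/
theorem stmt8 (n : ℕ) (hn : 0 < n)
    (h₁ h₂ : (Fin n → ZMod 2) → (Fin n → ZMod 2))
    (D₁ D₂ : Set (Fin n → ZMod 4))
    (hD₁ : D₁ = {ξ | ∃ d : Fin n → ZMod 2, ξ = Psi d + 2 * Psi (h₁ d)})
    (hD₂ : D₂ = {ξ | ∃ d : Fin n → ZMod 2, ξ = Psi d + 2 * Psi (h₂ d)})
    (hRDS₁ : IsRDS n D₁) (hRDS₂ : IsRDS n D₂)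
    (h0₁ : (0 : Fin n → ZMod 4) ∈ D₁) (h0₂ : (0 : Fin n → ZMod 4) ∈ D₂)
    (hq₁ : ∀ x y z : Fin n → ZMod 2,
      h₁ (x + y + z) + h₁ (x + y) + h₁ (x + z) + h₁ (y + z) + h₁ x + h₁ y + h₁ z = 0)
    (hq₂ : ∀ x y z : Fin n → ZMod 2,
      h₂ (x + y + z) + h₂ (x + y) + h₂ (x + z) + h₂ (y + z) + h₂ x + h₂ y + h₂ z = 0)
    (α : AddAut (Fin n → ZMod 4)) (g : Fin n → ZMod 4)
    (hα : (⇑α) '' D₁ = (fun d => d + g) '' D₂) :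
    ∃ β : AddAut (Fin n → ZMod 4), (⇑β) '' D₁ = D₂ := by
  -- find a with -g = Ψ a + 2Ψ(h₂ a)
  have h0img : (0 : Fin n → ZMod 4) ∈ (⇑α) '' D₁ := ⟨0, h0₁, map_zero α⟩
  rw [hα] at h0img
  obtain ⟨d, hdD, hdg⟩ := h0img
  have hgd : g = -d := by
    have : d + g = 0 := hdg
    linear_combination this
  rw [hD₂] at hdD
  obtain ⟨a, ha⟩ := hdD
  have hg : g = -(Psi a + 2 * Psi (h₂ a)) := by rw [hgd, ha]
  -- the linear correction map
  set M : (Fin n → ZMod 2) → (Fin n → ZMod 2) :=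
    fun y => h₂ (y + a) + h₂ y + h₂ a + y * a with hMdef
  have hM : ∀ y z, M y + M z = M (y + z) := by
    intro y z
    have E := hq₂ y z a
    funext i
    have Ei : h₂ (y + z + a) i + h₂ (y + z) i + h₂ (y + a) i + h₂ (z + a) i
        + h₂ y i + h₂ z i + h₂ a i = 0 := congrFun E i
    show (h₂ (y + a) i + h₂ y i + h₂ a i + y i * a i)
        + (h₂ (z + a) i + h₂ z i + h₂ a i + z i * a i)
      = h₂ (y + z + a) i + h₂ (y + z) i + h₂ a i + (y i + z i) * a i
    exact scalar_M_add _ _ _ _ _ _ _ _ _ _ Ei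
  -- key translation identity
  have hK : ∀ x : Fin n → ZMod 2,
      gammaFun M ((Psi x + 2 * Psi (h₂ x)) + g)
        = Psi (x + a) + 2 * Psi (h₂ (x + a)) := by
    intro x
    rw [hg, subPsi, gamma_psi]
    have hxa : x + a + a = x := by rw [add_assoc, addself, add_zero]
    have harg : (h₂ x + h₂ a + (1 + x) * a) + M (x + a) = h₂ (x + a) := by
      show (h₂ x + h₂ a + (1 + x) * a)
          + (h₂ (x + a + a) + h₂ (x + a) + h₂ a + (x + a) * a) = h₂ (x + a)
      rw [hxa]
      funext i
      show (h₂ x i + h₂ a i + (1 + x i) * a i)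
          + (h₂ x i + h₂ (x + a) i + h₂ a i + (x i + a i) * a i) = h₂ (x + a) i
      exact scalar_key _ _ _ _ _
    rw [harg]
  refine ⟨α.trans (gammaAut M hM), ?_⟩
  have hcoe : ⇑(α.trans (gammaAut M hM)) = gammaFun M ∘ ⇑α := rfl
  rw [hcoe, Set.image_comp, hα]
  ext ξ
  simp only [Set.mem_image, hD₂, Set.mem_setOf_eq]
  constructor
  · rintro ⟨ζ, ⟨ζ', ⟨x, rfl⟩, rfl⟩, rfl⟩
    exact ⟨x + a, hK x⟩
  · rintro ⟨y, rfl⟩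
    have hyaa : y + a + a = y := by rw [add_assoc, addself, add_zero]
    refine ⟨(Psi (y + a) + 2 * Psi (h₂ (y + a))) + g,
      ⟨Psi (y + a) + 2 * Psi (h₂ (y + a)), ⟨y + a, rfl⟩, rfl⟩, ?_⟩
    rw [hK (y + a), hyaa]
end

section
/- Let n be a positive integer and let f : F_{2^n} → F_{2^n} be a function with f(0) = 0 whose image is exactly {0, ξ} for some ξ ≠ 0. Then f is planar if and only if f is additive, i.e. f(x+y) = f(x) + f(y) for all x, y ∈ F_{2^n}. -/
open Function

set_option linter.unusedSectionVars false

namespace Stmt10Aux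

variable {K : Type*} [Field K] [CharP K 2]

/-- iterated discrete derivative: `Der g [t₁,...,tₖ] x = ∑_{S ⊆ L} g (x + ∑ S)`. -/
def Der (g : K → K) : List K → K → K
  | [], x => g x
  | t :: L, x => Der g L (x + t) + Der g L x

@[simp] lemma der_nil (g : K → K) (x : K) : Der g [] x = g x := rfl

lemma der_cons (g : K → K) (t : K) (L : List K) (x : K) :
    Der g (t :: L) x = Der g L (x + t) + Der g L x := rfl

lemma der_congr {g h : K → K} (e : ∀ x, g x = h x) : ∀ (L : List K) (x : K),
    Der g L x = Der h L x
  | [], x => e x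
  | t :: L, x => by rw [der_cons, der_cons, der_congr e L, der_congr e L]

lemma der_zero_fun {g : K → K} (e : ∀ x, g x = 0) : ∀ (L : List K) (x : K), Der g L x = 0
  | [], x => e x
  | t :: L, x => by rw [der_cons, der_zero_fun e L, der_zero_fun e L, add_zero]

lemma der_head (g : K → K) (t : K) : ∀ (L : List K) (x : K),
    Der g (t :: L) x = Der (fun y => g (y + t) + g y) L x
  | [], x => by simp [der_cons]
  | s :: L, x => by
      rw [der_cons, der_cons (g := g) (t := s), der_cons (g := g) (t := s),
        der_cons, ← der_head g t L, ← der_head g t L, der_cons, der_cons]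
      ring

lemma der_swap (g : K → K) (a b : K) (L : List K) (x : K) :
    Der g (a :: b :: L) x = Der g (b :: a :: L) x := by
  rw [der_head g a (b :: L) x, der_head _ b L x, der_head g b (a :: L) x, der_head _ a L x]
  apply der_congr
  intro y
  have h : y + b + a = y + a + b := by ring
  simp only [h]
  ring

lemma der_perm (g : K → K) {L L' : List K} (h : L.Perm L') (x : K) :
    Der g L x = Der g L' x := by
  induction h generalizing x with
  | nil => rfl
  | cons t _ ih => rw [der_cons, der_cons, ih, ih]
  | swap a b L => exact der_swap g b a L x
  | trans _ _ ih1 ih2 => rw [ih1, ih2]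

lemma der_translate_mem (g : K → K) {s : K} {L : List K} (hs : s ∈ L) (x : K) :
    Der g L (x + s) = Der g L x := by
  rcases List.mem_iff_append.mp hs with ⟨p, q, rfl⟩
  have hperm : (p ++ s :: q).Perm (s :: (p ++ q)) := List.perm_middle
  rw [der_perm g hperm, der_perm g hperm, der_cons, der_cons]
  have h2 : x + s + s = x := by
    rw [add_assoc, CharTwo.add_self_eq_zero, add_zero]
  rw [h2]
  ring

lemma der_translate_closure (g : K → K) {L : List K} {t : K}
    (ht : t ∈ AddSubmonoid.closure {y : K | y ∈ L}) (x : K) :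
    Der g L (x + t) = Der g L x := by
  induction ht using AddSubmonoid.closure_induction generalizing x with
  | mem y hy => exact der_translate_mem g hy x
  | zero => rw [add_zero]
  | add y z _ _ ihy ihz => rw [← add_assoc, ihz, ihy]

open Module Submodule

variable [Algebra (ZMod 2) K] [FiniteDimensional (ZMod 2) K]

lemma span_le_closure {s : Set K} {t : K} (ht : t ∈ Submodule.span (ZMod 2) s) :
    t ∈ AddSubmonoid.closure s := by
  induction ht using Submodule.span_induction with
  | mem y hy => exact AddSubmonoid.subset_closure hy
  | zero => exact zero_mem _
  | add y z _ _ ihy ihz => exact add_mem ihy ihz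
  | smul c y _ ihy =>
      have hc := (by decide : ∀ d : ZMod 2, d = 0 ∨ d = 1) c
      rcases hc with rfl | rfl
      · rw [zero_smul]; exact zero_mem _
      · rw [one_smul]; exact ihy

lemma finrank_span_insert {s : Set K} {t : K} (h : t ∉ Submodule.span (ZMod 2) s) :
    finrank (ZMod 2) (Submodule.span (ZMod 2) (insert t s))
      = finrank (ZMod 2) (Submodule.span (ZMod 2) s) + 1 := by
  have ht0 : t ≠ 0 := fun h0 => h (h0 ▸ zero_mem _)
  have hinf : (ZMod 2 ∙ t) ⊓ Submodule.span (ZMod 2) s = ⊥ := by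
    rw [eq_bot_iff]
    rintro x ⟨hx1, hx2⟩
    rcases Submodule.mem_span_singleton.mp hx1 with ⟨c, rfl⟩
    have hc := (by decide : ∀ d : ZMod 2, d = 0 ∨ d = 1) c
    rcases hc with rfl | rfl
    · simp
    · rw [one_smul] at hx2 ⊢; exact absurd hx2 h
  have := Submodule.finrank_sup_add_finrank_inf_eq (ZMod 2 ∙ t) (Submodule.span (ZMod 2) s)
  rw [hinf, finrank_bot, add_zero, finrank_span_singleton ht0] at this
  rw [Submodule.span_insert, this, add_comm]

lemma der_zero_of_rank :
    ∀ (L : List K) (g : K → K),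
    finrank (ZMod 2) (Submodule.span (ZMod 2) {y : K | y ∈ L}) < L.length →
    ∀ x, Der g L x = 0 := by
  intro L
  induction L with
  | nil => intro g h x; simp at h
  | cons t M ih =>
      intro g h x
      by_cases ht : t ∈ Submodule.span (ZMod 2) {y : K | y ∈ M}
      · rw [der_cons, der_translate_closure g (span_le_closure ht), CharTwo.add_self_eq_zero]
      · have hset : {y : K | y ∈ t :: M} = insert t {y : K | y ∈ M} := by
          ext y; simp [List.mem_cons]
        rw [hset, finrank_span_insert ht, List.length_cons] at h
        have h' : finrank (ZMod 2) (Submodule.span (ZMod 2) {y : K | y ∈ M}) < M.length := by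
          omega
        rw [der_cons, ih g h', ih g h', add_zero]


section Rep

variable {n : ℕ}
local notation "F" => GaloisField 2 n

lemma zmod2_cases (d : ZMod 2) : d = 0 ∨ d = 1 := (by decide : ∀ d : ZMod 2, d = 0 ∨ d = 1) d

/-- turn an additive function on `F` into a `ZMod 2`-linear map. -/
def mkLinear (L : F → F) (h : ∀ x y, L (x + y) = L x + L y) : F →ₗ[ZMod 2] F where
  toFun := L
  map_add' := h
  map_smul' := by
    intro m x
    have hL0 : L 0 = 0 := by
      have := h 0 0; rw [add_zero] at this; exact (left_eq_add.mp this).symm ▸ rfl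
    rcases zmod2_cases m with rfl | rfl
    · simp [hL0]
    · simp

lemma card_F (hn : n ≠ 0) : Nat.card F = 2 ^ n := GaloisField.card 2 n hn

lemma poly_eq_zero_of_eval (hn : n ≠ 0) {p : Polynomial F}
    (hdeg : p.natDegree < 2 ^ n) (h : ∀ x : F, p.eval x = 0) : p = 0 := by
  haveI : Fintype F := Fintype.ofFinite F
  have hcard : Fintype.card F = 2 ^ n := by
    rw [← Nat.card_eq_fintype_card]; exact card_F hn
  apply Polynomial.eq_zero_of_natDegree_lt_card_of_eval_eq_zero' p Finset.univ
    (fun i _ => h i)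
  rwa [Finset.card_univ, hcard]

lemma sum_pow_inj (hn : n ≠ 0) {c : Fin n → F}
    (h : ∀ x : F, ∑ i, c i * x ^ (2 ^ (i : ℕ)) = 0) : c = 0 := by
  set p : Polynomial F := ∑ i : Fin n, Polynomial.monomial (2 ^ (i : ℕ)) (c i) with hp
  have hdeg : p.natDegree < 2 ^ n := by
    have hub : ∀ i : Fin n, (2:ℕ) ^ (i : ℕ) ≤ 2 ^ (n - 1) := fun i =>
      Nat.pow_le_pow_right (by norm_num) (by omega)
    apply lt_of_le_of_lt (Polynomial.natDegree_sum_le_of_forall_le _ _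
      (fun i _ => (Polynomial.natDegree_monomial_le (c i)).trans (hub i)))
    exact Nat.pow_lt_pow_right (by norm_num) (by omega)
  have heval : ∀ x : F, p.eval x = 0 := by
    intro x
    rw [hp, Polynomial.eval_finset_sum]
    simpa [Polynomial.eval_monomial] using h x
  have hp0 := poly_eq_zero_of_eval hn hdeg heval
  funext i
  have := congrArg (fun q => Polynomial.coeff q (2 ^ (i : ℕ))) hp0
  simp only [hp, Polynomial.finset_sum_coeff, Polynomial.coeff_monomial,
    Polynomial.coeff_zero] at this
  rw [Finset.sum_eq_single i] at this
  · simpa using this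
  · intro j _ hji
    have : (2:ℕ) ^ (j:ℕ) ≠ 2 ^ (i:ℕ) := fun e =>
      hji (Fin.ext (Nat.pow_right_injective (le_refl 2) e))
    simp [this]
  · intro hi; exact absurd (Finset.mem_univ i) hi


/-- the `q`-polynomial map attached to coefficients `c`. -/
noncomputable def EMap (c : Fin n → F) : F →ₗ[ZMod 2] F :=
  mkLinear (fun x => ∑ i, c i * x ^ (2 ^ (i : ℕ))) (by
    intro x y
    rw [← Finset.sum_add_distrib]
    refine Finset.sum_congr rfl fun i _ => ?_
    rw [add_pow_char_pow, mul_add])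

lemma EMap_apply (c : Fin n → F) (x : F) : EMap c x = ∑ i, c i * x ^ (2 ^ (i : ℕ)) := rfl

/-- the coefficient map as a linear map. -/
noncomputable def PhiMap : (Fin n → F) →ₗ[ZMod 2] (F →ₗ[ZMod 2] F) where
  toFun := EMap
  map_add' := by
    intro c d; ext x
    simp only [EMap_apply, LinearMap.add_apply, Pi.add_apply, add_mul,
      Finset.sum_add_distrib]
  map_smul' := by
    intro m c
    rcases zmod2_cases m with rfl | rfl
    · ext x; simp [EMap_apply]
    · ext x; simp [EMap_apply]

theorem additive_rep (hn : n ≠ 0) (L : F → F) (h : ∀ x y, L (x + y) = L x + L y) :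
    ∃ c : Fin n → F, ∀ x, L x = ∑ i, c i * x ^ (2 ^ (i : ℕ)) := by
  have hinj : Function.Injective (PhiMap (n := n)) := by
    rw [injective_iff_map_eq_zero]
    intro c hc
    apply sum_pow_inj hn
    intro x
    have := congrArg (fun (M : F →ₗ[ZMod 2] F) => M x) hc
    simpa [PhiMap, EMap_apply] using this

  have hrankF : finrank (ZMod 2) F = n := GaloisField.finrank 2 hn
  have h1 : finrank (ZMod 2) (Fin n → F) = n * n := by
    rw [Module.finrank_pi_fintype (ZMod 2)]
    simp [hrankF, Finset.sum_const, mul_comm]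
  have h2 : finrank (ZMod 2) (F →ₗ[ZMod 2] F) = n * n := by
    rw [Module.finrank_linearMap, hrankF]
  have hsurj : Function.Surjective (PhiMap (n := n)) := by
    rw [← LinearMap.range_eq_top]
    apply Submodule.eq_top_of_finrank_eq
    rw [LinearMap.finrank_range_of_inj hinj, h1, h2]
  obtain ⟨c, hc⟩ := hsurj (mkLinear L h)
  exact ⟨c, fun x => by
    have := congrArg (fun (M : F →ₗ[ZMod 2] F) => M x) hc
    simpa [PhiMap, EMap_apply, mkLinear] using this.symm⟩

end Rep
lemma two_pow_add_eq : ∀ N a b c d : ℕ, a + b + c + d ≤ N →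
    2 ^ a + 2 ^ b = 2 ^ c + 2 ^ d → (a = c ∧ b = d) ∨ (a = d ∧ b = c) := by
  intro N
  induction N with
  | zero =>
      intro a b c d hN _
      have ha : a = 0 := by omega
      have hb : b = 0 := by omega
      have hc : c = 0 := by omega
      have hd : d = 0 := by omega
      subst ha; subst hb; subst hc; subst hd
      exact Or.inl ⟨rfl, rfl⟩
  | succ N ih =>
      intro a b c d hN h
      have p : ∀ x : ℕ, x ≠ 0 → 2 ^ x = 2 * 2 ^ (x - 1) := by
        intro x hx
        cases x with
        | zero => exact absurd rfl hx
        | succ m => rw [pow_succ, Nat.succ_sub_one, mul_comm]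
      have pos : ∀ x : ℕ, 0 < 2 ^ x := fun x => Nat.pow_pos (by norm_num)
      have pinj : ∀ x y : ℕ, 2 ^ x = 2 ^ y → x = y :=
        fun x y e => Nat.pow_right_injective (le_refl 2) e
      by_cases ha : a = 0 <;> by_cases hb : b = 0 <;> by_cases hc : c = 0 <;>
        by_cases hd : d = 0
      -- TTTT
      · subst ha; subst hb; subst hc; subst hd; exact Or.inl ⟨rfl, rfl⟩
      -- TTTF
      · exfalso; subst ha; subst hb; subst hc
        have := p d hd; have := pos (d - 1); omega
      -- TTFT
      · exfalso; subst ha; subst hb; subst hd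
        have := p c hc; have := pos (c - 1); omega
      -- TTFF
      · exfalso; subst ha; subst hb
        have := p c hc; have := p d hd; have := pos (c - 1); have := pos (d - 1); omega
      -- TFTT
      · exfalso; subst ha; subst hc; subst hd
        have := p b hb; have := pos (b - 1); omega
      -- TFTF
      · subst ha; subst hc
        exact Or.inl ⟨rfl, pinj b d (by omega)⟩
      -- TFFT
      · subst ha; subst hd
        exact Or.inr ⟨rfl, pinj b c (by omega)⟩
      -- TFFF
      · exfalso; subst ha
        have := p b hb; have := p c hc; have := p d hd; omega
      -- FTTT
      · exfalso; subst hb; subst hc; subst hd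
        have := p a ha; have := pos (a - 1); omega
      -- FTTF
      · subst hb; subst hc
        exact Or.inr ⟨pinj a d (by omega), rfl⟩
      -- FTFT
      · subst hb; subst hd
        exact Or.inl ⟨pinj a c (by omega), rfl⟩
      -- FTFF
      · exfalso; subst hb
        have := p a ha; have := p c hc; have := p d hd; omega
      -- FFTT
      · exfalso; subst hc; subst hd
        have := p a ha; have := p b hb; have := pos (a - 1); have := pos (b - 1); omega
      -- FFTF
      · exfalso; subst hc
        have := p a ha; have := p b hb; have := p d hd; omega
      -- FFFT
      · exfalso; subst hd
        have := p a ha; have := p b hb; have := p c hc; omega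
      -- FFFF
      · have ea := p a ha; have eb := p b hb; have ec := p c hc; have ed := p d hd
        have h' : 2 ^ (a - 1) + 2 ^ (b - 1) = 2 ^ (c - 1) + 2 ^ (d - 1) := by omega
        rcases ih (a - 1) (b - 1) (c - 1) (d - 1) (by omega) h' with ⟨h1, h2⟩ | ⟨h1, h2⟩
        · exact Or.inl ⟨by omega, by omega⟩
        · exact Or.inr ⟨by omega, by omega⟩


section Mexp

/-- canonical representative of `2^k - 2^i mod (2^n - 1)` in `[1, 2^n-2]` (0 on diagonal). -/
def mexp (n i k : ℕ) : ℕ :=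
  if i = k then 0 else if i < k then 2 ^ k - 2 ^ i else 2 ^ k + (2 ^ n - 1) - 2 ^ i

lemma mexp_facts {n i k : ℕ} (hi : i < n) (hk : k < n) (hik : i ≠ k) :
    1 ≤ mexp n i k ∧ mexp n i k ≤ 2 ^ n - 2 := by
  have hbi : 2 ^ i ≤ 2 ^ (n - 1) := Nat.pow_le_pow_right (by norm_num) (by omega)
  have hbk : 2 ^ k ≤ 2 ^ (n - 1) := Nat.pow_le_pow_right (by norm_num) (by omega)
  have hq : 2 ^ n = 2 * 2 ^ (n - 1) := by
    cases n with
    | zero => omega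
    | succ m => rw [pow_succ, Nat.succ_sub_one, mul_comm]
  have hpi : 0 < 2 ^ i := Nat.pow_pos (by norm_num)
  have hpk : 0 < 2 ^ k := Nat.pow_pos (by norm_num)
  rcases lt_or_gt_of_ne hik with h | h
  · have : 2 ^ i < 2 ^ k := Nat.pow_lt_pow_right (by norm_num) h
    unfold mexp
    rw [if_neg hik, if_pos h]
    omega
  · have : 2 ^ k < 2 ^ i := Nat.pow_lt_pow_right (by norm_num) h
    unfold mexp
    rw [if_neg hik, if_neg (by omega)]
    omega

lemma mexp_inj {n i k i' k' : ℕ} (hi : i < n) (hk : k < n) (hi' : i' < n) (hk' : k' < n)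
    (hik : i ≠ k) (hik' : i' ≠ k') (h : mexp n i k = mexp n i' k') : i = i' ∧ k = k' := by
  have hbi : 2 ^ i ≤ 2 ^ (n - 1) := Nat.pow_le_pow_right (by norm_num) (by omega)
  have hbk : 2 ^ k ≤ 2 ^ (n - 1) := Nat.pow_le_pow_right (by norm_num) (by omega)
  have hbi' : 2 ^ i' ≤ 2 ^ (n - 1) := Nat.pow_le_pow_right (by norm_num) (by omega)
  have hbk' : 2 ^ k' ≤ 2 ^ (n - 1) := Nat.pow_le_pow_right (by norm_num) (by omega)
  have hq : 2 ^ n = 2 * 2 ^ (n - 1) := by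
    cases n with
    | zero => omega
    | succ m => rw [pow_succ, Nat.succ_sub_one, mul_comm]
  have hpi : 0 < 2 ^ i := Nat.pow_pos (by norm_num)
  have hpk : 0 < 2 ^ k := Nat.pow_pos (by norm_num)
  have hpi' : 0 < 2 ^ i' := Nat.pow_pos (by norm_num)
  have hpk' : 0 < 2 ^ k' := Nat.pow_pos (by norm_num)
  unfold mexp at h
  rw [if_neg hik, if_neg hik'] at h
  rcases lt_or_gt_of_ne hik with h1 | h1 <;> rcases lt_or_gt_of_ne hik' with h2 | h2
  · have e1 : 2 ^ i < 2 ^ k := Nat.pow_lt_pow_right (by norm_num) h1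
    have e2 : 2 ^ i' < 2 ^ k' := Nat.pow_lt_pow_right (by norm_num) h2
    rw [if_pos h1, if_pos h2] at h
    have key : 2 ^ k + 2 ^ i' = 2 ^ k' + 2 ^ i := by omega
    rcases two_pow_add_eq (k + i' + k' + i) k i' k' i (le_refl _) key with ⟨a1, a2⟩ | ⟨a1, a2⟩
    · omega
    · omega
  · exfalso
    have e1 : 2 ^ i < 2 ^ k := Nat.pow_lt_pow_right (by norm_num) h1
    have e2 : 2 ^ k' < 2 ^ i' := Nat.pow_lt_pow_right (by norm_num) h2
    rw [if_pos h1, if_neg (by omega)] at h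
    omega
  · exfalso
    have e1 : 2 ^ k < 2 ^ i := Nat.pow_lt_pow_right (by norm_num) h1
    have e2 : 2 ^ i' < 2 ^ k' := Nat.pow_lt_pow_right (by norm_num) h2
    rw [if_neg (by omega), if_pos h2] at h
    omega
  · have e1 : 2 ^ k < 2 ^ i := Nat.pow_lt_pow_right (by norm_num) h1
    have e2 : 2 ^ k' < 2 ^ i' := Nat.pow_lt_pow_right (by norm_num) h2
    rw [if_neg (by omega), if_neg (by omega)] at h
    have key : 2 ^ k + 2 ^ i' = 2 ^ k' + 2 ^ i := by omega
    rcases two_pow_add_eq (k + i' + k' + i) k i' k' i (le_refl _) key with ⟨a1, a2⟩ | ⟨a1, a2⟩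
    · omega
    · omega

end Mexp

section Claim

variable {n : ℕ}
local notation "F" => GaloisField 2 n

lemma char2_eq_of_add_eq_zero {a b : F} (h : a + b = 0) : a = b := by
  have hb : b + b = 0 := CharTwo.add_self_eq_zero b
  calc a = a + (b + b) := by rw [hb, add_zero]
    _ = (a + b) + b := by ring
    _ = b := by rw [h, zero_add]

lemma sq_surjective : Function.Surjective (fun x : F => x * x) := by
  have hinj : Function.Injective (fun x : F => x * x) := by
    intro x y h
    simp only at h
    have : (x + y) * (x + y) = 0 := by
      have : (x + y) * (x + y) = x * x + y * y + (x * y + x * y) := by ring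
      rw [CharTwo.add_self_eq_zero, add_zero, h, CharTwo.add_self_eq_zero] at this
      exact this
    have := mul_self_eq_zero.mp this
    exact char2_eq_of_add_eq_zero this
  exact Finite.surjective_of_injective hinj

lemma pow_mexp (hn : n ≠ 0) {x : F} (hx : x ≠ 0) {i k : ℕ} (hi : i < n) (hk : k < n) :
    x ^ (mexp n i k) * x ^ (2 ^ i) = x ^ (2 ^ k) := by
  haveI : Fintype F := Fintype.ofFinite F
  have hcard : Fintype.card F = 2 ^ n := by
    rw [← Nat.card_eq_fintype_card]; exact card_F hn
  have hpi : 0 < 2 ^ i := Nat.pow_pos (by norm_num)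
  have hq1 : 1 ≤ 2 ^ n := Nat.one_le_two_pow
  by_cases hik : i = k
  · subst hik; rw [mexp, if_pos rfl, pow_zero, one_mul]
  · rcases lt_or_gt_of_ne hik with h1 | h1
    · have e1 : 2 ^ i < 2 ^ k := Nat.pow_lt_pow_right (by norm_num) h1
      rw [mexp, if_neg hik, if_pos h1, ← pow_add]
      congr 1
      omega
    · have e1 : 2 ^ k < 2 ^ i := Nat.pow_lt_pow_right (by norm_num) h1
      have e2 : 2 ^ i ≤ 2 ^ (n - 1) := Nat.pow_le_pow_right (by norm_num) (by omega)
      have hq : 2 ^ n = 2 * 2 ^ (n - 1) := by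
        cases n with
        | zero => omega
        | succ m => rw [pow_succ, Nat.succ_sub_one, mul_comm]
      have hpk : 0 < 2 ^ k := Nat.pow_pos (by norm_num)
      rw [mexp, if_neg hik, if_neg (by omega), ← pow_add]
      have hexp : 2 ^ k + (2 ^ n - 1) - 2 ^ i + 2 ^ i = 2 ^ k + (2 ^ n - 1) := by omega
      rw [hexp, pow_add]
      have : x ^ (2 ^ n - 1) = 1 := by
        rw [← hcard]; exact FiniteField.pow_card_sub_one_eq_one x hx
      rw [this, mul_one]

theorem claimF (hn : n ≠ 0) (ξ : F) (hξ : ξ ≠ 0) (B : F → F → F)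
    (h1 : ∀ x x' y, B (x + x') y = B x y + B x' y)
    (h2 : ∀ x y y', B x (y + y') = B x y + B x y')
    (h3 : ∀ x, B x x = 0)
    (h4 : ∀ x : F, x ≠ 0 → B x (ξ * x⁻¹) = 0) :
    ∀ x y, B x y = 0 := by
  classical
  -- coefficients in the second variable
  choose c hc using fun x : F => additive_rep hn (fun y => B x y) (fun y y' => h2 x y y')
  have hcadd : ∀ x x' : F, ∀ i, c (x + x') i = c x i + c x' i := by
    intro x x'
    have hz : ∀ y : F, ∑ i, (c (x + x') i + (c x i + c x' i)) * y ^ (2 ^ (i : ℕ)) = 0 := by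
      intro y
      have : ∑ i, (c (x + x') i + (c x i + c x' i)) * y ^ (2 ^ (i : ℕ))
          = (∑ i, c (x + x') i * y ^ (2 ^ (i : ℕ)))
            + ((∑ i, c x i * y ^ (2 ^ (i : ℕ))) + (∑ i, c x' i * y ^ (2 ^ (i : ℕ)))) := by
        rw [← Finset.sum_add_distrib, ← Finset.sum_add_distrib]
        exact Finset.sum_congr rfl fun i _ => by ring
      rw [this, ← hc (x + x') y, ← hc x y, ← hc x' y, h1 x x' y, CharTwo.add_self_eq_zero]
    have h0 := sum_pow_inj hn hz
    intro i
    have := congrFun h0 i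
    exact char2_eq_of_add_eq_zero this
  -- coefficients in the first variable
  choose d hd using fun i : Fin n =>
    additive_rep hn (fun x => c x i) (fun x x' => hcadd x x' i)
  have hB : ∀ x y : F, B x y = ∑ i, (∑ k, d i k * x ^ (2 ^ (k : ℕ))) * y ^ (2 ^ (i : ℕ)) := by
    intro x y
    rw [hc x y]
    exact Finset.sum_congr rfl fun i _ => by rw [hd i x]
  -- off-diagonal coefficients vanish
  haveI : Fintype F := Fintype.ofFinite F
  have hoff : ∀ i k : Fin n, (i : ℕ) ≠ (k : ℕ) → d i k = 0 := by
    intro i0 k0 hik0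
    set P : Polynomial F :=
      ∑ i : Fin n, ∑ k : Fin n,
        Polynomial.monomial (mexp n i k) (d i k * ξ ^ (2 ^ (i : ℕ))) with hP
    have hPdeg : P.natDegree ≤ 2 ^ n - 2 := by
      apply Polynomial.natDegree_sum_le_of_forall_le
      intro i _
      apply Polynomial.natDegree_sum_le_of_forall_le
      intro k _
      refine (Polynomial.natDegree_monomial_le _).trans ?_
      by_cases h : (i : ℕ) = (k : ℕ)
      · rw [mexp, if_pos h]; omega
      · exact (mexp_facts i.isLt k.isLt h).2
    have hPeval : ∀ x : F, x ≠ 0 → P.eval x = 0 := by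
      intro x hx
      have : P.eval x = ∑ i : Fin n, ∑ k : Fin n,
          (d i k * ξ ^ (2 ^ (i : ℕ))) * x ^ (mexp n (i : ℕ) (k : ℕ)) := by
        rw [hP]
        rw [Polynomial.eval_finset_sum]
        refine Finset.sum_congr rfl fun i _ => ?_
        rw [Polynomial.eval_finset_sum]
        exact Finset.sum_congr rfl fun k _ => by rw [Polynomial.eval_monomial]
      rw [this]
      have hBx := h4 x hx
      rw [hB x (ξ * x⁻¹)] at hBx
      rw [← hBx]
      refine Finset.sum_congr rfl fun i _ => ?_
      rw [Finset.sum_mul]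
      refine Finset.sum_congr rfl fun k _ => ?_
      -- d i k * ξ^{2^i} * x^{mexp} = d i k * x^{2^k} * (ξ x⁻¹)^{2^i}
      have hxpow : x ^ (2 ^ (i : ℕ)) ≠ 0 := pow_ne_zero _ hx
      have key : x ^ (mexp n (i : ℕ) (k : ℕ)) * x ^ (2 ^ (i : ℕ)) = x ^ (2 ^ (k : ℕ)) :=
        pow_mexp hn hx i.isLt k.isLt
      have hinv : (x ^ (2 ^ (i : ℕ)))⁻¹ * x ^ (2 ^ (i : ℕ)) = 1 := inv_mul_cancel₀ hxpow
      apply mul_right_cancel₀ hxpow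
      rw [mul_pow, inv_pow]
      calc d i k * ξ ^ 2 ^ (i : ℕ) * x ^ mexp n (i : ℕ) (k : ℕ) * x ^ 2 ^ (i : ℕ)
          = d i k * ξ ^ 2 ^ (i : ℕ) * (x ^ mexp n (i : ℕ) (k : ℕ) * x ^ 2 ^ (i : ℕ)) := by ring
        _ = d i k * ξ ^ 2 ^ (i : ℕ) * x ^ 2 ^ (k : ℕ) := by rw [key]
        _ = d i k * x ^ 2 ^ (k : ℕ) * ξ ^ 2 ^ (i : ℕ) * ((x ^ 2 ^ (i : ℕ))⁻¹ * x ^ 2 ^ (i : ℕ)) := by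
            rw [hinv, mul_one]; ring
        _ = d i k * x ^ 2 ^ (k : ℕ) * (ξ ^ 2 ^ (i : ℕ) * (x ^ 2 ^ (i : ℕ))⁻¹) * x ^ 2 ^ (i : ℕ) := by
            ring
    -- multiply by X to also vanish at 0
    have hQ : Polynomial.X * P = 0 := by
      apply poly_eq_zero_of_eval hn
      · calc (Polynomial.X * P).natDegree ≤ 1 + P.natDegree := by
              simpa using Polynomial.natDegree_mul_le (p := (Polynomial.X : Polynomial F)) (q := P)
          _ < 2 ^ n := by
              have h2 : (2:ℕ) ≤ 2 ^ n := by
                have : (2:ℕ) ^ 1 ≤ 2 ^ n := Nat.pow_le_pow_right (by norm_num) (by omega)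
                simpa using this
              refine lt_of_le_of_lt (Nat.add_le_add_left hPdeg 1) ?_
              omega
      · intro x
        by_cases hx : x = 0
        · subst hx; simp
        · rw [Polynomial.eval_mul, hPeval x hx, mul_zero]
    have hP0 : P = 0 := by
      rcases mul_eq_zero.mp hQ with h | h
      · exact absurd h Polynomial.X_ne_zero
      · exact h
    -- extract the coefficient at mexp n i0 k0
    have hM := (mexp_facts i0.isLt k0.isLt hik0).1
    have hco := congrArg (fun q : Polynomial F => q.coeff (mexp n (i0 : ℕ) (k0 : ℕ))) hP0
    simp only [hP, Polynomial.finset_sum_coeff, Polynomial.coeff_monomial,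
      Polynomial.coeff_zero] at hco
    rw [Finset.sum_eq_single i0] at hco
    · rw [Finset.sum_eq_single k0] at hco
      · rw [if_pos rfl] at hco
        have hξpow : ξ ^ (2 ^ (i0 : ℕ)) ≠ 0 := pow_ne_zero _ hξ
        exact (mul_eq_zero.mp hco).resolve_right hξpow
      · intro k _ hkk
        rw [if_neg]
        intro he
        by_cases hik : (i0 : ℕ) = (k : ℕ)
        · have hz : mexp n (i0 : ℕ) (k : ℕ) = 0 := by rw [mexp, if_pos hik]
          omega
        · exact hkk (Fin.ext (mexp_inj i0.isLt k.isLt i0.isLt k0.isLt hik hik0 he).2)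
      · intro hk0; exact absurd (Finset.mem_univ k0) hk0
    · intro i _ hii
      apply Finset.sum_eq_zero
      intro k _
      rw [if_neg]
      intro he
      by_cases hik : (i : ℕ) = (k : ℕ)
      · have hz : mexp n (i : ℕ) (k : ℕ) = 0 := by rw [mexp, if_pos hik]
        omega
      · exact hii (Fin.ext (mexp_inj i.isLt k.isLt i0.isLt k0.isLt hik hik0 he).1)
    · intro hi0; exact absurd (Finset.mem_univ i0) hi0
  -- diagonal coefficients vanish
  have hdiag : ∀ i : Fin n, d i i = 0 := by
    have hz : ∀ z : F, ∑ i : Fin n, d i i * z ^ (2 ^ (i : ℕ)) = 0 := by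
      intro z
      obtain ⟨x, hx⟩ := sq_surjective z
      have h3x := h3 x
      rw [hB x x] at h3x
      have : ∑ i : Fin n, (∑ k, d i k * x ^ (2 ^ (k : ℕ))) * x ^ (2 ^ (i : ℕ))
          = ∑ i : Fin n, d i i * z ^ (2 ^ (i : ℕ)) := by
        refine Finset.sum_congr rfl fun i _ => ?_
        rw [Finset.sum_eq_single i]
        · rw [← hx]
          rw [mul_assoc, ← pow_add, ← two_mul, pow_mul]
          congr 2
          ring
        · intro k _ hki
          rw [hoff i k (fun e => hki (Fin.ext e.symm)), zero_mul]
        · intro hi; exact absurd (Finset.mem_univ i) hi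
      rw [← this, h3x]
    intro i
    exact congrFun (sum_pow_inj hn hz) i
  intro x y
  rw [hB]
  apply Finset.sum_eq_zero
  intro i _
  have : ∀ k : Fin n, d i k = 0 := by
    intro k
    by_cases h : (i : ℕ) = (k : ℕ)
    · have : i = k := Fin.ext h
      subst this; exact hdiag i
    · exact hoff i k h
  simp [this]

end Claim

section Main

variable {n : ℕ}
local notation "F" => GaloisField 2 n

lemma two_eq_zero : (2 : F) = 0 := by
  have := CharTwo.add_self_eq_zero (1 : F)
  calc (2 : F) = 1 + 1 := by norm_num
    _ = 0 := this

/-- the key additivity-in-the-head lemma, assuming `x`-constancy. -/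
lemma head_add (f : F → F) (L₁ : List F)
    (hconst : ∀ (a : F) (x : F), Der f (a :: L₁) x = Der f (a :: L₁) 0) (a a' : F) :
    Der f ((a + a') :: L₁) 0 = Der f (a :: L₁) 0 + Der f (a' :: L₁) 0 := by
  have e1 := hconst a a'
  simp only [der_cons, zero_add] at e1 ⊢
  have hcomm : a' + a = a + a' := by ring
  rw [hcomm] at e1
  have htwo : (2 : F) = 0 := two_eq_zero
  linear_combination e1 - Der f L₁ a' * htwo


lemma seed_der (f : F → F) (ξ : F) (hξ : ξ ≠ 0)
    (him : ∀ z : F, f z = 0 ∨ f z = ξ)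
    (hpl : ∀ a : F, a ≠ 0 → Function.Injective (fun x => f (x + a) + f x + a * x))
    {a : F} (ha : a ≠ 0) (L : List F) (x : F) :
    Der f (a :: (ξ * a⁻¹) :: L) x = 0 := by
  set b := ξ * a⁻¹ with hb
  have hab : a * b = ξ := by
    rw [hb]; field_simp
  have hkey : ∀ y : F, (f (y + b + a) + f (y + b)) = (f (y + a) + f y) := by
    intro y
    by_contra hne
    -- each difference is 0 or ξ
    have hval : ∀ z : F, (f (z + a) + f z = 0) ∨ (f (z + a) + f z = ξ) := by
      intro z
      rcases him (z + a) with h1 | h1 <;> rcases him z with h2 | h2 <;> rw [h1, h2]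
      · left; rw [add_zero]
      · right; rw [zero_add]
      · right; rw [add_zero]
      · left; exact CharTwo.add_self_eq_zero ξ
    have hsum : (f (y + b + a) + f (y + b)) + (f (y + a) + f y) = ξ := by
      rcases hval (y + b) with h1 | h1 <;> rcases hval y with h2 | h2 <;> rw [h1, h2]
      · exact absurd (h1.trans h2.symm) hne
      · rw [zero_add]
      · rw [add_zero]
      · exact absurd (h1.trans h2.symm) hne
    have hginj := hpl a ha
    have hgeq : f ((y + b) + a) + f (y + b) + a * (y + b) = f (y + a) + f y + a * y := by
      have expand : f ((y + b) + a) + f (y + b) + a * (y + b)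
          = (f (y + b + a) + f (y + b)) + a * y + ξ := by
        rw [mul_add, hab]; ring
      rw [expand]
      have : (f (y + b + a) + f (y + b)) = (f (y + a) + f y) + ξ := by
        have htwo : (2 : F) = 0 := two_eq_zero
        linear_combination hsum - (f (y + a) + f y) * htwo
      rw [this]
      have hxi : ξ + ξ = 0 := CharTwo.add_self_eq_zero ξ
      linear_combination hxi
    have := hginj hgeq
    have hb0 : b = 0 := by
      have : y + b = y + 0 := by rw [add_zero]; exact this
      exact add_left_cancel this
    rw [hb] at hb0
    have ha' : a⁻¹ ≠ 0 := inv_ne_zero ha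
    exact (mul_ne_zero hξ ha') hb0
  rw [der_head, der_head]
  apply der_zero_fun
  intro y
  have := hkey y
  have htwo2 : f (y + a) + f y + (f (y + a) + f y) = 0 := CharTwo.add_self_eq_zero _
  linear_combination this + htwo2

lemma der_two_zero (hn : n ≠ 0) (f : F → F) (ξ : F) (hξ : ξ ≠ 0)
    (him : ∀ z : F, f z = 0 ∨ f z = ξ)
    (hpl : ∀ a : F, a ≠ 0 → Function.Injective (fun x => f (x + a) + f x + a * x)) :
    ∀ (j : ℕ), j ≤ n - 1 → ∀ (L : List F), L.length = n - 1 - j →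
      ∀ (a c x : F), Der f (a :: c :: L) x = 0 := by
  intro j
  induction j with
  | zero =>
      intro _ L hL a c x
      apply der_zero_of_rank
      have h1 : Module.finrank (ZMod 2)
          (Submodule.span (ZMod 2) {y : F | y ∈ a :: c :: L}) ≤ n :=
        le_trans (Submodule.finrank_le _) (le_of_eq (GaloisField.finrank 2 hn))
      have h2 : (a :: c :: L).length = n + 1 := by
        simp [hL]; omega
      omega
  | succ j ih =>
      intro hj L hL a c x
      have ihL : ∀ (L' : List F), L'.length = n - 1 - j → ∀ (a c x : F),
          Der f (a :: c :: L') x = 0 := ih (by omega)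
      -- constancy in x
      have hconst : ∀ (a c : F) (x : F), Der f (a :: c :: L) x = Der f (a :: c :: L) 0 := by
        have hshift : ∀ (a c t x : F), Der f (a :: c :: L) (x + t) = Der f (a :: c :: L) x := by
          intro a c t x
          have hzero : Der f (t :: a :: c :: L) x = 0 := by
            have hperm : (a :: c :: t :: L).Perm (t :: a :: c :: L) := by
              refine (List.Perm.cons a (List.Perm.swap t c L)).trans ?_
              exact List.Perm.swap t a (c :: L)
            rw [← der_perm f hperm x]
            exact ihL (t :: L) (by simp [hL]; omega) a c x
          rw [der_cons] at hzero
          exact char2_eq_of_add_eq_zero hzero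
        intro a c x
        have := hshift a c x 0
        rwa [zero_add] at this
      -- the bilinear form
      set B : F → F → F := fun a c => Der f (a :: c :: L) 0 with hBdef
      have hswap : ∀ a c : F, B a c = B c a := fun a c => der_swap f a c L 0
      have h1 : ∀ a a' c : F, B (a + a') c = B a c + B a' c := by
        intro a a' c
        exact head_add f (c :: L) (fun u x => hconst u c x) a a'
      have h2 : ∀ a c c' : F, B a (c + c') = B a c + B a c' := by
        intro a c c'
        rw [hswap a (c + c'), hswap a c, hswap a c']
        exact head_add f (a :: L)
          (fun u x => by
            rw [der_swap f u a L x, der_swap f u a L 0]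
            exact hconst a u x) c c'
      have h3 : ∀ a : F, B a a = 0 := by
        intro a
        rw [hBdef]
        simp only [der_cons]
        have e1 : (0 : F) + a + a = 0 := by
          rw [add_assoc, CharTwo.add_self_eq_zero, add_zero]
        rw [e1]
        have htwo2 := CharTwo.add_self_eq_zero (Der f L 0 + Der f L (0 + a))
        linear_combination htwo2
      have h4 : ∀ a : F, a ≠ 0 → B a (ξ * a⁻¹) = 0 := by
        intro a ha
        exact seed_der f ξ hξ him hpl ha L 0
      have hB0 := claimF hn ξ hξ B (fun x x' y => h1 x x' y) (fun x y y' => h2 x y y') h3 h4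
      rw [hconst a c x]
      exact hB0 a c

end Main
end Stmt10Aux

open Function

/-- a function `f` on F_{2ⁿ} with `f(0) = 0` and image exactly
`{0, ξ}` for some `ξ ≠ 0` is planar iff it is additive. -/
theorem stmt10 (n : ℕ) (hn : 0 < n) (f : GaloisField 2 n → GaloisField 2 n)
    (hf0 : f 0 = 0) (ξ : GaloisField 2 n) (hξ : ξ ≠ 0)
    (him : Set.range f = {0, ξ}) :
    IsPlanar f ↔ ∀ x y : GaloisField 2 n, f (x + y) = f x + f y := by
  open Stmt10Aux in
  constructor
  · intro hpl x y
    have himp : ∀ z : GaloisField 2 n, f z = 0 ∨ f z = ξ := by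
      intro z
      have hz : f z ∈ Set.range f := Set.mem_range_self z
      rw [him] at hz
      rcases hz with h | h
      · exact Or.inl h
      · exact Or.inr h
    have hpl' : ∀ a : GaloisField 2 n, a ≠ 0 →
        Function.Injective (fun x => f (x + a) + f x + a * x) :=
      fun a ha => (hpl a ha).injective
    have h := der_two_zero hn.ne' f ξ hξ himp hpl' (n - 1) (le_refl _) []
      (by simp) x y 0
    simp only [der_cons, der_nil, zero_add, hf0, add_zero] at h
    linear_combination h - (f x + f y) * (two_eq_zero (n := n))
  · intro hadd a ha
    have e : ∀ z : GaloisField 2 n, f (z + a) + f z = f a := by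
      intro z
      rw [hadd z a]
      have := CharTwo.add_self_eq_zero (f z)
      linear_combination this
    constructor
    · intro x y hxy
      simp only at hxy
      rw [show f (x + a) + f x + a * x = (f (x + a) + f x) + a * x by ring,
        show f (y + a) + f y + a * y = (f (y + a) + f y) + a * y by ring,
        e x, e y] at hxy
      have := add_left_cancel hxy
      exact mul_left_cancel₀ ha this
    · intro y
      refine ⟨a⁻¹ * (y + f a), ?_⟩
      simp only
      rw [show f (a⁻¹ * (y + f a) + a) + f (a⁻¹ * (y + f a)) + a * (a⁻¹ * (y + f a))
          = (f (a⁻¹ * (y + f a) + a) + f (a⁻¹ * (y + f a))) + a * (a⁻¹ * (y + f a)) by ring,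
        e _, ← mul_assoc, mul_inv_cancel₀ ha, one_mul]
      have := CharTwo.add_self_eq_zero (f a)
      linear_combination this
end

section
/- Let f : F_{2^n} → F_{2^n} be a function whose image is exactly {0, ξ} for some ξ ≠ 0. Then f is planar if and only if for every a ≠ 0 and every x ∈ F_{2^n}, f(x+a) + f(x) + f(x + a + ξ/a) + f(x + ξ/a) = 0. -/
open Function

/-- a function `f` on F_{2ⁿ} with image exactly `{0, ξ}`, `ξ ≠ 0`,
is planar iff `f(x+a) + f(x) + f(x+a+ξ/a) + f(x+ξ/a) = 0` for all `a ≠ 0`, `x`. -/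
theorem stmt11 (n : ℕ) (hn : 0 < n) (f : GaloisField 2 n → GaloisField 2 n)
    (ξ : GaloisField 2 n) (hξ : ξ ≠ 0) (him : Set.range f = {0, ξ}) :
    IsPlanar f ↔
    ∀ a : GaloisField 2 n, a ≠ 0 → ∀ x : GaloisField 2 n,
      f (x + a) + f x + f (x + a + ξ / a) + f (x + ξ / a) = 0 := by
  have h2 : (2 : GaloisField 2 n) = 0 := by
    have := CharP.cast_eq_zero (GaloisField 2 n) 2
    exact_mod_cast this
  have haddself : ∀ u : GaloisField 2 n, u + u = 0 := by
    intro u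
    have : u + u = 2 * u := by ring
    rw [this, h2, zero_mul]
  have hmem : ∀ x, f x = 0 ∨ f x = ξ := by
    intro x
    have : f x ∈ Set.range f := Set.mem_range_self x
    rw [him] at this
    simpa using this
  constructor
  · intro hp a ha x
    have hb := hp a ha
    have hξa : ξ / a ≠ 0 := div_ne_zero hξ ha
    by_contra hne
    have hor : f (x + a) + f x + f (x + a + ξ / a) + f (x + ξ / a) = 0 ∨
        f (x + a) + f x + f (x + a + ξ / a) + f (x + ξ / a) = ξ := by
      rcases hmem (x + a) with h1 | h1 <;> rcases hmem x with h2x | h2x <;>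
        rcases hmem (x + a + ξ / a) with h3 | h3 <;>
          rcases hmem (x + ξ / a) with h4 | h4 <;>
            simp [h1, h2x, h3, h4, haddself]
    have huw : f (x + a) + f x + f (x + a + ξ / a) + f (x + ξ / a) = ξ :=
      hor.resolve_left hne
    have haξ : a * (ξ / a) = ξ := by field_simp
    have harg : x + a + ξ / a = (x + ξ / a) + a := by ring
    rw [harg] at huw
    have heq : f (x + a) + f x + a * x
        = f ((x + ξ / a) + a) + f (x + ξ / a) + a * (x + ξ / a) := by
      linear_combination huw - (f ((x + ξ / a) + a) + f (x + ξ / a)) * h2 - haξ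
    have hinj : x = x + ξ / a := hb.injective heq
    have h0 : x + 0 = x + ξ / a := by rw [add_zero]; exact hinj
    exact hξa (add_left_cancel h0).symm
  · intro hcond a ha
    rw [← Finite.injective_iff_bijective]
    intro x y hxy
    simp only at hxy
    have key : f (x + a) + f x + (f (y + a) + f y) = a * (x + y) := by
      linear_combination hxy + (f (y + a) + f y - a * x) * h2
    have hor : f (x + a) + f x + (f (y + a) + f y) = 0 ∨
        f (x + a) + f x + (f (y + a) + f y) = ξ := by
      rcases hmem (x + a) with h1 | h1 <;> rcases hmem x with h2x | h2x <;>
        rcases hmem (y + a) with h3 | h3 <;> rcases hmem y with h4 | h4 <;>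
          simp [h1, h2x, h3, h4, haddself]
    rcases hor with h0 | hx
    · have hxy0 : a * (x + y) = 0 := by rw [← key, h0]
      have hxy' : x + y = 0 := by
        rcases mul_eq_zero.mp hxy0 with h | h
        · exact absurd h ha
        · exact h
      have := congrArg (· + y) hxy'
      simpa [add_assoc, haddself] using this
    · exfalso
      have hxyx : a * (x + y) = ξ := by rw [← key, hx]
      have haξ : a * (ξ / a) = ξ := by field_simp
      have hy : y = x + ξ / a := by
        apply mul_left_cancel₀ ha
        rw [mul_add, haξ]
        linear_combination hxyx - a * x * h2
      have hc := hcond a ha x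
      have huw0 : f (x + a) + f x + (f (y + a) + f y) = 0 := by
        rw [hy]
        calc f (x + a) + f x + (f (x + ξ / a + a) + f (x + ξ / a))
            = f (x + a) + f x + f (x + a + ξ / a) + f (x + ξ / a) := by ring_nf
          _ = 0 := hc
      rw [huw0] at hx
      exact hξ hx.symm
end

section
/- Let ξ ∈ F_{2^n} be nonzero and let a ∈ F_{2^n} with a ≠ 0 and a² ≠ ξ. Define the sequence (a_i)_{i≥0} by a_0 := a, a_1 := a + ξ/a, and a_{i+1} := a_{i−1} + ξ/a_i for i ≥ 1 (with the convention x/0 := 0). Then a_i ≠ 0 for all i, and for all i ≥ 0: a_{2i} = a·(a²/(a²+ξ))^i and a_{2i+1} = a·((a²+ξ)/a²)^{i+1}. -/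
/-- for `ξ ≠ 0` and `a ≠ 0` with `a² ≠ ξ`, the sequence
`a₀ = a`, `a₁ = a + ξ/a`, `a_{i+1} = a_{i−1} + ξ/a_i` (with `x/0 = 0`)
has all terms nonzero, and `a_{2i} = a·(a²/(a²+ξ))^i`,
`a_{2i+1} = a·((a²+ξ)/a²)^{i+1}`. -/
theorem stmt13 (n : ℕ) (hn : 0 < n) (ξ a : GaloisField 2 n)
    (hξ : ξ ≠ 0) (ha : a ≠ 0) (ha2 : a ^ 2 ≠ ξ)
    (s : ℕ → GaloisField 2 n)
    (hs0 : s 0 = a) (hs1 : s 1 = a + ξ / a)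
    (hrec : ∀ i : ℕ, s (i + 2) = s i + ξ / s (i + 1)) :
    (∀ i, s i ≠ 0) ∧
    (∀ i : ℕ, s (2 * i) = a * (a ^ 2 / (a ^ 2 + ξ)) ^ i ∧
      s (2 * i + 1) = a * ((a ^ 2 + ξ) / a ^ 2) ^ (i + 1)) := by
  have h2 : (2 : GaloisField 2 n) = 0 := by
    have := CharP.cast_eq_zero (GaloisField 2 n) 2
    simpa using this
  have haξ : a ^ 2 + ξ ≠ 0 := by
    intro h
    exact ha2 (by linear_combination h - ξ * h2)
  have key : ∀ i : ℕ, s (2 * i) = a * (a ^ 2 / (a ^ 2 + ξ)) ^ i ∧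
      s (2 * i + 1) = a * ((a ^ 2 + ξ) / a ^ 2) ^ (i + 1) := by
    intro i
    induction i with
    | zero =>
      constructor
      · simpa using hs0
      · rw [hs1]; simp only [div_pow]; field_simp; ring
    | succ i ih =>
      obtain ⟨ih0, ih1⟩ := ih
      have hs1ne : s (2 * i + 1) ≠ 0 := by
        rw [ih1]
        exact mul_ne_zero ha (pow_ne_zero _ (div_ne_zero haξ (pow_ne_zero _ ha)))
      have e0 : s (2 * (i + 1)) = a * (a ^ 2 / (a ^ 2 + ξ)) ^ (i + 1) := by
        have := hrec (2 * i)
        rw [show 2 * i + 2 = 2 * (i + 1) by ring] at this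
        rw [this, ih0, ih1]
        simp only [div_pow]
        field_simp
        ring_nf
        linear_combination (a ^ 2 * a ^ (i * 2) * ξ * (a ^ 2 + ξ) ^ i) * h2
      have hs2ne : s (2 * (i + 1)) ≠ 0 := by
        rw [e0]
        exact mul_ne_zero ha (pow_ne_zero _ (div_ne_zero (pow_ne_zero _ ha) haξ))
      refine ⟨e0, ?_⟩
      have := hrec (2 * i + 1)
      rw [show 2 * i + 1 + 2 = 2 * (i + 1) + 1 by ring,
          show 2 * i + 1 + 1 = 2 * (i + 1) by ring] at this
      rw [this, ih1, e0]
      simp only [div_pow]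
      field_simp
      ring_nf
  have hne : ∀ i, s i ≠ 0 := by
    intro i
    rcases Nat.even_or_odd i with ⟨k, hk⟩ | ⟨k, hk⟩
    · rw [show i = 2 * k by omega, (key k).1]
      exact mul_ne_zero ha (pow_ne_zero _ (div_ne_zero (pow_ne_zero _ ha) haξ))
    · rw [show i = 2 * k + 1 by omega, (key k).2]
      exact mul_ne_zero ha (pow_ne_zero _ (div_ne_zero haξ (pow_ne_zero _ ha)))
  exact ⟨hne, key⟩
end

section
/- Let ξ ∈ F_{2^n} be nonzero and let a ∈ F_{2^n} with a ≠ 0 and a² ≠ ξ. Define the sequence (a_i)_{i≥0} by a_0 := a, a_1 := a + ξ/a, and a_{i+1} := a_{i−1} + ξ/a_i for i ≥ 1 (with the convention x/0 := 0). Then the sequence (a_i) is periodic, and its least period equals 2·ord(1 + ξ/a²), where ord denotes the multiplicative order in F_{2^n}^×. -/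
/-- for `ξ ≠ 0` and `a ≠ 0` with `a² ≠ ξ`, the sequence
`a₀ = a`, `a₁ = a + ξ/a`, `a_{i+1} = a_{i−1} + ξ/a_i` (with `x/0 = 0`) is
periodic with least period `2·ord(1 + ξ/a²)`, where `ord` is the multiplicative
order in F_{2ⁿ}. -/
theorem stmt14 (n : ℕ) (hn : 0 < n) (ξ a : GaloisField 2 n)
    (hξ : ξ ≠ 0) (ha : a ≠ 0) (ha2 : a ^ 2 ≠ ξ)
    (s : ℕ → GaloisField 2 n)
    (hs0 : s 0 = a) (hs1 : s 1 = a + ξ / a)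
    (hrec : ∀ i : ℕ, s (i + 2) = s i + ξ / s (i + 1)) :
    Function.Periodic s (2 * orderOf (1 + ξ / a ^ 2)) ∧
    (∀ p : ℕ, 0 < p → Function.Periodic s p →
      2 * orderOf (1 + ξ / a ^ 2) ≤ p) := by
  have h2 : (2 : GaloisField 2 n) = 0 := by
    exact_mod_cast CharP.cast_eq_zero (GaloisField 2 n) 2
  set β : GaloisField 2 n := 1 + ξ / a ^ 2 with hβ
  have ha2' : a ^ 2 ≠ 0 := pow_ne_zero _ ha
  have hβa : a ^ 2 * β = a ^ 2 + ξ := by rw [hβ]; field_simp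
  have hβ0 : β ≠ 0 := by
    intro h
    apply ha2
    have h0 : a ^ 2 + ξ = 0 := by rw [← hβa, h, mul_zero]
    linear_combination h0 - ξ * h2
  have hβ1 : β ≠ 1 := by
    intro h
    have h0 : a ^ 2 * β = a ^ 2 := by rw [h, mul_one]
    have : ξ = 0 := by linear_combination hβa - h0 + ξ * h2
    exact hξ this
  -- closed form : s (2k) = a β⁻ᵏ, s (2k+1) = a β^(k+1)
  have hform : ∀ k : ℕ, s (2 * k) = a * (β ^ k)⁻¹ ∧ s (2 * k + 1) = a * β ^ (k + 1) := by
    intro k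
    induction k with
    | zero =>
      constructor
      · simpa using hs0
      · rw [show 2 * 0 + 1 = 1 by ring, hs1, pow_one, hβ]
        field_simp
    | succ k ih =>
      obtain ⟨h1, h2'⟩ := ih
      have e1 : s (2 * (k + 1)) = a * (β ^ (k + 1))⁻¹ := by
        have hr := hrec (2 * k)
        rw [show 2 * k + 2 = 2 * (k + 1) by ring] at hr
        rw [hr, h1, h2']
        clear_value β
        field_simp
        linear_combination β ^ k * hβa + (ξ * β ^ k) * h2
      refine ⟨e1, ?_⟩
      have hr := hrec (2 * k + 1)
      rw [show 2 * k + 1 + 2 = 2 * (k + 1) + 1 by ring,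
          show 2 * k + 1 + 1 = 2 * (k + 1) by ring] at hr
      rw [hr, h2', e1]
      field_simp
      ring_nf
      linear_combination (-(β * β ^ k)) * hβa
  set d : ℕ := orderOf β with hd
  have hβd : β ^ d = 1 := pow_orderOf_eq_one β
  have hd0 : 0 < d := by
    have h := orderOf_units (y := Units.mk0 β hβ0)
    simp only [Units.val_mk0] at h
    rw [hd, h]
    exact orderOf_pos _
  constructor
  · -- periodicity
    intro x
    rcases Nat.even_or_odd x with ⟨k, hk⟩ | ⟨k, hk⟩
    · have := (hform (k + d)).1
      rw [show 2 * (k + d) = k + k + 2 * d by ring, ← hk] at this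
      rw [this, (by rw [hk]; ring_nf : x = 2 * k), (hform k).1,
          pow_add, hβd, mul_one]
    · have := (hform (k + d)).2
      rw [show 2 * (k + d) + 1 = 2 * k + 1 + 2 * d by ring, ← hk] at this
      rw [this, hk, (hform k).2, show k + d + 1 = (k + 1) + d by ring,
          pow_add, hβd, mul_one]
  · -- minimality
    intro p hp hper
    rcases Nat.even_or_odd p with ⟨m, hm⟩ | ⟨m, hm⟩
    · -- p = 2m even
      have hm' : p = 2 * m := by omega
      have hm0 : 0 < m := by omega
      have h0 := hper 0
      rw [zero_add, hm', (hform m).1, hs0] at h0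
      have hβm : β ^ m = 1 := by
        field_simp at h0
        exact h0.symm
      have : d ∣ m := orderOf_dvd_of_pow_eq_one hβm
      calc 2 * d ≤ 2 * m := by
            have := Nat.le_of_dvd hm0 this; omega
        _ = p := hm'.symm
    · -- p = 2m+1 odd : impossible
      exfalso
      have h0 := hper 0
      rw [zero_add, hm, (hform m).2, hs0] at h0
      have hβm1 : β ^ (m + 1) = 1 := by
        field_simp at h0
        exact h0
      have h1 := hper 1
      rw [show 1 + p = 2 * (m + 1) by omega, (hform (m + 1)).1, hs1] at h1
      have hsβ : a * β = a + ξ / a := by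
        rw [hβ]; field_simp
      rw [← hsβ] at h1
      have h1' : (β ^ (m + 1))⁻¹ = β := mul_left_cancel₀ ha h1
      rw [hβm1, inv_one] at h1'
      exact hβ1 h1'.symm
end

section
/- Let f : F_{2^n} → F_{2^n} be a function with f(0) = 0 and let ξ ∈ F_{2^n} be nonzero. Let P_n := {1/(1+α) : α is a primitive element of F_{2^n}} ∪ {1}, and assume that P_n spans F_{2^n} as a vector space over F_2. Then {(a, ξ/a) : a ∈ F_{2^n}} ⊆ A_f (with the convention ξ/0 := 0) if and only if f is additive, i.e. f(x+y) = f(x) + f(y) for all x, y. -/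
/-- `A_f = {(a,b) : f(x+a) + f(x) + f(x+a+b) + f(x+b) = 0 for all x}`. -/
def Af {F : Type*} [Field F] (f : F → F) : Set (F × F) :=
  {p | ∀ x, f (x + p.1) + f x + f (x + p.1 + p.2) + f (x + p.2) = 0}

section Aux

variable {F : Type*} [Field F] {f : F → F}

lemma mem_Af {a b : F} :
    (a, b) ∈ Af f ↔ ∀ x, f (x + a) + f x + f (x + a + b) + f (x + b) = 0 :=
  Iff.rfl

lemma af_symm {a b : F} (h : (a, b) ∈ Af f) : (b, a) ∈ Af f := by
  rw [mem_Af] at h ⊢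
  intro x
  have e : x + b + a = x + a + b := by ring
  rw [e]
  linear_combination h x

lemma af_diag (h2 : ∀ z : F, z + z = 0) (a : F) : (a, a) ∈ Af f := by
  rw [mem_Af]
  intro x
  have e : x + a + a = x := by rw [add_assoc, h2 a, add_zero]
  rw [e]
  linear_combination h2 (f (x + a)) + h2 (f x)

lemma af_zero (h2 : ∀ z : F, z + z = 0) (a : F) : (a, (0 : F)) ∈ Af f := by
  rw [mem_Af]
  intro x
  rw [add_zero, add_zero]
  linear_combination h2 (f (x + a)) + h2 (f x)

lemma af_add (h2 : ∀ z : F, z + z = 0) {a b b' : F}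
    (hb : (a, b) ∈ Af f) (hb' : (a, b') ∈ Af f) : (a, b + b') ∈ Af f := by
  rw [mem_Af] at hb hb' ⊢
  intro x
  have h1 := hb x
  have h1' := hb' (x + b)
  have e1 : x + b + a = x + a + b := by ring
  rw [e1] at h1'
  have e2 : x + a + b + b' = x + a + (b + b') := by ring
  rw [e2] at h1'
  have e3 : x + b + b' = x + (b + b') := by ring
  rw [e3] at h1'
  linear_combination h1 + h1' - h2 (f (x + a + b)) - h2 (f (x + b))

lemma af_step (h2 : ∀ z : F, z + z = 0) (htwo : (2 : F) = 0) {ξ : F}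
    (hbasic : ∀ a, (a, ξ / a) ∈ Af f) (hξ : ξ ≠ 0) {α A : F}
    (hα0 : α ≠ 0) (hα1 : 1 + α ≠ 0) (hA : A ≠ 0)
    (h : (A * α, ξ / (A * α * (1 + α))) ∈ Af f) :
    (A, ξ / (A * (1 + α))) ∈ Af f := by
  have hAα : A * α ≠ 0 := mul_ne_zero hA hα0
  have I1 : ξ / (A * α * (1 + α)) + ξ / (A * α) = ξ / (A * (1 + α)) := by
    rw [div_add_div _ _ (mul_ne_zero hAα hα1) hAα,
      div_eq_div_iff (mul_ne_zero (mul_ne_zero hAα hα1) hAα) (mul_ne_zero hA hα1)]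
    linear_combination (ξ * A ^ 2 * α * (1 + α)) * htwo
  have s3 : (A * α, ξ / (A * (1 + α))) ∈ Af f := by
    rw [← I1]; exact af_add h2 h (hbasic (A * α))
  have s4 := af_symm s3
  have I2 : ξ / (ξ / (A * (1 + α))) = A + A * α := by
    rw [div_div_eq_mul_div, mul_comm, mul_div_assoc, div_self hξ, mul_one]
    ring
  have s5 := hbasic (ξ / (A * (1 + α)))
  rw [I2] at s5
  have s6 := af_add h2 s4 s5
  have I3 : A * α + (A + A * α) = A := by
    linear_combination (A * α) * htwo
  rw [I3] at s6
  exact af_symm s6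

lemma af_pow (h2 : ∀ z : F, z + z = 0) (htwo : (2 : F) = 0) {ξ : F}
    (hbasic : ∀ a, (a, ξ / a) ∈ Af f) (hξ : ξ ≠ 0) {α p : F}
    (hα0 : α ≠ 0) (hα1 : 1 + α ≠ 0) (hp : p ≠ 0) (k : ℕ)
    (hbase : ξ = p ^ 2 * α ^ (2 * k) * (1 + α)) :
    (p, ξ / (p * (1 + α))) ∈ Af f := by
  have claim : ∀ j : ℕ, j ≤ k →
      (p * α ^ (k - j), ξ / (p * α ^ (k - j) * (1 + α))) ∈ Af f := by
    intro j
    induction j with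
    | zero =>
      intro _
      have hne : p * α ^ (k - 0) * (1 + α) ≠ 0 :=
        mul_ne_zero (mul_ne_zero hp (pow_ne_zero _ hα0)) hα1
      have e : ξ / (p * α ^ (k - 0) * (1 + α)) = p * α ^ (k - 0) := by
        rw [hbase, div_eq_iff hne]
        simp only [Nat.sub_zero]
        ring
      rw [e]
      exact af_diag h2 _
    | succ j ih =>
      intro hjk
      have hj : j ≤ k := by omega
      have e : k - j = (k - (j + 1)) + 1 := by omega
      have ihh := ih hj
      rw [e] at ihh
      have hA : p * α ^ (k - (j + 1)) ≠ 0 :=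
        mul_ne_zero hp (pow_ne_zero _ hα0)
      have e2 : p * α ^ (k - (j + 1) + 1) = p * α ^ (k - (j + 1)) * α := by
        rw [pow_succ]; ring
      rw [e2] at ihh
      exact af_step h2 htwo hbasic hξ hα0 hα1 hA ihh
  have h0 := claim k le_rfl
  simpa using h0

end Aux

/-- let `f(0) = 0`, `ξ ≠ 0`, and suppose the set
`P_n = {1/(1+α) : α primitive} ∪ {1}` spans F_{2ⁿ} over F₂ (primitive meaning
of multiplicative order 2ⁿ − 1). Then `{(a, ξ/a) : a ∈ F_{2ⁿ}} ⊆ A_f`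
(with `ξ/0 = 0`) iff `f` is additive. -/
theorem stmt16 (n : ℕ) (hn : 0 < n) (f : GaloisField 2 n → GaloisField 2 n)
    (hf0 : f 0 = 0) (ξ : GaloisField 2 n) (hξ : ξ ≠ 0)
    (Pn : Set (GaloisField 2 n))
    (hPn : Pn = {x | ∃ α : GaloisField 2 n, orderOf α = 2 ^ n - 1 ∧ x = 1 / (1 + α)}
      ∪ {1})
    (hspan : Submodule.span (ZMod 2) Pn = ⊤) :
    (∀ a : GaloisField 2 n, (a, ξ / a) ∈ Af f) ↔
    (∀ x y : GaloisField 2 n, f (x + y) = f x + f y) := by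
  have h2 : ∀ z : GaloisField 2 n, z + z = 0 := CharTwo.add_self_eq_zero
  have htwo : (2 : GaloisField 2 n) = 0 := by linear_combination h2 1
  constructor
  · intro hbasic x y
    by_cases hy : y = 0
    · subst hy; simp [hf0]
    -- squaring is surjective
    have hsq : ∀ d : GaloisField 2 n, ∃ c, c * c = d := by
      have hinj : Function.Injective (fun c : GaloisField 2 n => c * c) := by
        intro a b hab
        simp only at hab
        have hz : (a + b) * (a + b) = 0 := by
          linear_combination hab + (a * b + b * b) * htwo
        have h0 : a + b = 0 := mul_self_eq_zero.mp hz
        linear_combination h0 - b * htwo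
      intro d
      obtain ⟨c, hc⟩ := Finite.surjective_of_injective hinj d
      exact ⟨c, hc⟩
    -- the row at y is everything
    have hrow : ∀ b : GaloisField 2 n, (y, b) ∈ Af f := by
      let S : Submodule (ZMod 2) (GaloisField 2 n) :=
        { carrier := {b | (y, b) ∈ Af f}
          add_mem' := fun hb hb' => af_add h2 hb hb'
          zero_mem' := af_zero h2 y
          smul_mem' := by
            intro r b hb
            have hcases : ∀ r : ZMod 2, r = 0 ∨ r = 1 := by decide
            rcases hcases r with rfl | rfl
            · rw [zero_smul]; exact af_zero h2 y
            · rw [one_smul]; exact hb }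
      have hμsub : ∀ q ∈ Pn, (ξ / y) * q ∈ S := by
        intro q hq
        rw [hPn] at hq
        rcases hq with hq | hq
        · obtain ⟨α, hord, rfl⟩ := hq
          by_cases hα1 : 1 + α = 0
          · rw [hα1, div_zero, mul_zero]
            exact S.zero_mem
          · have hpow : 2 ^ n - 1 ≠ 0 := by
              have : 1 < 2 ^ n := Nat.one_lt_two_pow_iff.mpr (by omega)
              omega
            have hα0 : α ≠ 0 := by
              intro h0
              have h1 := pow_orderOf_eq_one α
              rw [hord, h0, zero_pow hpow] at h1
              exact zero_ne_one h1
            -- α generates all nonzero elements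
            have hsurj : ∀ z : GaloisField 2 n, z ≠ 0 → ∃ k : ℕ, α ^ k = z := by
              intro z hz
              have hcardF : Nat.card (GaloisField 2 n) = 2 ^ n :=
                GaloisField.card 2 n (by omega)
              have hcardU : Nat.card (GaloisField 2 n)ˣ = 2 ^ n - 1 := by
                rw [Nat.card_units, hcardF]
              have hou : orderOf (Units.mk0 α hα0) = 2 ^ n - 1 := by
                rw [← orderOf_units]; exact hord
              have htop : Subgroup.zpowers (Units.mk0 α hα0) = ⊤ := by
                apply Subgroup.eq_top_of_card_eq
                rw [Nat.card_zpowers, hou, hcardU]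
              have hmem : Units.mk0 z hz ∈ Subgroup.zpowers (Units.mk0 α hα0) := by
                rw [htop]; exact Subgroup.mem_top _
              rw [← mem_powers_iff_mem_zpowers] at hmem
              obtain ⟨k, hk⟩ := hmem
              refine ⟨k, ?_⟩
              have := congrArg Units.val hk
              simpa using this
            have hd : ξ / (y ^ 2 * (1 + α)) ≠ 0 :=
              div_ne_zero hξ (mul_ne_zero (pow_ne_zero 2 hy) hα1)
            obtain ⟨c, hc⟩ := hsq (ξ / (y ^ 2 * (1 + α)))
            have hc0 : c ≠ 0 := by
              intro h0; rw [h0, mul_zero] at hc; exact hd hc.symm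
            obtain ⟨k, hk⟩ := hsurj c hc0
            have hbase : ξ = y ^ 2 * α ^ (2 * k) * (1 + α) := by
              have e : α ^ (2 * k) = c * c := by
                rw [two_mul, pow_add, hk]
              rw [e]
              rw [eq_div_iff (mul_ne_zero (pow_ne_zero 2 hy) hα1)] at hc
              linear_combination -hc
            have hkey := af_pow h2 htwo hbasic hξ hα0 hα1 hy k hbase
            have e : (ξ / y) * (1 / (1 + α)) = ξ / (y * (1 + α)) := by
              rw [div_mul_div_comm, mul_one]
            show (y, (ξ / y) * (1 / (1 + α))) ∈ Af f
            rw [e]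
            exact hkey
        · rcases hq with rfl
          show (y, (ξ / y) * 1) ∈ Af f
          rw [mul_one]
          exact hbasic y
      intro b
      let μ : GaloisField 2 n →ₗ[ZMod 2] GaloisField 2 n :=
        LinearMap.mulLeft (ZMod 2) (ξ / y)
      have hle : Submodule.span (ZMod 2) Pn ≤ S.comap μ :=
        Submodule.span_le.mpr fun q hq =>
          Submodule.mem_comap.mpr (hμsub q hq)
      have hb : (y / ξ) * b ∈ Submodule.span (ZMod 2) Pn := by
        rw [hspan]; exact Submodule.mem_top
      have hmem := hle hb
      rw [Submodule.mem_comap] at hmem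
      have happ : μ ((y / ξ) * b) = (ξ / y) * ((y / ξ) * b) := rfl
      have hxi : (ξ / y) * ((y / ξ) * b) = b := by field_simp
      rw [happ, hxi] at hmem
      exact hmem
    have hv := hrow x 0
    simp only [zero_add] at hv
    rw [hf0] at hv
    have e : y + x = x + y := by ring
    rw [e] at hv
    linear_combination hv - (f x + f y) * htwo
  · intro hadd a
    rw [mem_Af]
    intro x
    rw [hadd (x + a) (ξ / a), hadd x a, hadd x (ξ / a)]
    linear_combination (2 * f x + f a + f (ξ / a)) * htwo
end

section
/- Let g : F_2^n → F_2 be an arbitrary Boolean function, let Π : F_2^n → F_2^n, and define f : F_2^n × F_2^n → F_2 by f(x,y) = ⟨x, Π(y)⟩ + g(y), where ⟨x,y⟩ = Σ_{i=0}^{n−1} x_i y_i. Then Π is a permutation of F_2^n if and only if for every subset Λ ⊆ {0,…,n−1} and every (a,b) ∈ F_2^n × F_2^n with (a,b) ≠ (0,0), the Boolean function (x,y) ↦ f(x+a, y+b) + f(x,y) + Σ_{i∈Λ} y_i b_i on F_2^n × F_2^n is balanced, i.e. takes each of the two values of F_2 exactly 2^{2n−1} times. (That is, f is shifted-bent with respect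 to any subset of the y-coordinate indices if and only if Π is a permutation.) -/
open Function Finset

private lemma natcard_prod_snd {α β : Type*} [Fintype α] [Fintype β] (P : α × β → Prop) :
    Nat.card {p : α × β // P p} = ∑ b : β, Nat.card {a : α // P (a, b)} := by
  classical
  have e : {p : α × β // P p} ≃ Σ b : β, {a : α // P (a, b)} :=
    { toFun := fun q => ⟨q.1.2, ⟨q.1.1, q.2⟩⟩
      invFun := fun s => ⟨(s.2.1, s.1), s.2.2⟩
      left_inv := fun ⟨⟨x, y⟩, h⟩ => rfl
      right_inv := fun ⟨y, x, h⟩ => rfl }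
  rw [Nat.card_congr e]
  simp [Nat.card_eq_fintype_card]

private lemma natcard_prod_fst {α β : Type*} [Fintype α] [Fintype β] (P : α × β → Prop) :
    Nat.card {p : α × β // P p} = ∑ a : α, Nat.card {b : β // P (a, b)} := by
  classical
  have e : {p : α × β // P p} ≃ Σ a : α, {b : β // P (a, b)} :=
    { toFun := fun q => ⟨q.1.1, ⟨q.1.2, q.2⟩⟩
      invFun := fun s => ⟨(s.1, s.2.1), s.2.2⟩
      left_inv := fun ⟨⟨x, y⟩, h⟩ => rfl
      right_inv := fun ⟨y, x, h⟩ => rfl }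
  rw [Nat.card_congr e]
  simp [Nat.card_eq_fintype_card]

private lemma half_card {α : Type*} [Fintype α] (F : α → ZMod 2) (e : α ≃ α)
    (he : ∀ x, F (e x) = F x + 1) (c : ZMod 2) :
    2 * Nat.card {x // F x = c} = Fintype.card α := by
  classical
  have h1 : Nat.card {x // F x = c} = Nat.card {x // F x = c + 1} :=
    Nat.card_congr (e.subtypeEquiv fun x => by
      rw [he]
      have : ∀ u v : ZMod 2, u = v ↔ u + 1 = v + 1 := by decide
      exact this _ _)
  have h2 : Nat.card {x // F x = c + 1} = Nat.card {x // ¬ F x = c} :=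
    Nat.card_congr (Equiv.subtypeEquivRight fun x => by
      have : ∀ u v : ZMod 2, u = v + 1 ↔ ¬ u = v := by decide
      exact this _ _)
  simp only [Nat.card_eq_fintype_card] at h1 h2 ⊢
  have h3 := Fintype.card_subtype_compl (fun x => F x = c)
  have h4 := Fintype.card_subtype_le (fun x => F x = c)
  omega

private lemma lin_balanced {n : ℕ} (hn : 0 < n) (w : Fin n → ZMod 2) (hw : w ≠ 0) (c : ZMod 2) :
    Nat.card {x : Fin n → ZMod 2 // ∑ i, x i * w i = c} = 2 ^ (n - 1) := by
  classical
  obtain ⟨i0, hi0⟩ : ∃ i, w i ≠ 0 := by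
    by_contra h; push_neg at h; exact hw (funext h)
  have hw1 : w i0 = 1 := by
    have : ∀ u : ZMod 2, u ≠ 0 → u = 1 := by decide
    exact this _ hi0
  have key := half_card (fun x : Fin n → ZMod 2 => ∑ i, x i * w i)
    (Equiv.addLeft (Pi.single i0 1)) (fun x => by
      simp only [Equiv.coe_addLeft, Pi.add_apply, add_mul, Finset.sum_add_distrib]
      have : ∑ i, (Pi.single i0 1 : Fin n → ZMod 2) i * w i = 1 := by
        simp [Pi.single_apply, ite_mul, Finset.sum_ite_eq', hw1]
      rw [this]; ring) c
  have hcard : Fintype.card (Fin n → ZMod 2) = 2 ^ n := by simp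
  have hpow : 2 ^ n = 2 * 2 ^ (n - 1) := by
    conv_lhs => rw [← Nat.sub_add_cancel hn]
    rw [pow_succ]; ring
  rw [hcard, hpow] at key
  exact Nat.eq_of_mul_eq_mul_left (by norm_num) key

private lemma keycount {n : ℕ}
    (g : (Fin n → ZMod 2) → ZMod 2)
    (π : (Fin n → ZMod 2) → (Fin n → ZMod 2))
    (f : (Fin n → ZMod 2) × (Fin n → ZMod 2) → ZMod 2)
    (hf : ∀ x y : Fin n → ZMod 2, f (x, y) = (∑ i, x i * π y i) + g y)
    (Λ : Finset (Fin n)) (a b : Fin n → ZMod 2) (c : ZMod 2) :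
    Nat.card {p : (Fin n → ZMod 2) × (Fin n → ZMod 2) //
        f (p.1 + a, p.2 + b) + f p + ∑ i ∈ Λ, p.2 i * b i = c}
      = ∑ y : Fin n → ZMod 2, Nat.card {x : Fin n → ZMod 2 //
          ∑ i, x i * (π (y + b) i + π y i)
            = c + (∑ i, a i * π (y + b) i) + g (y + b) + g y + ∑ i ∈ Λ, y i * b i} := by
  rw [natcard_prod_snd]
  refine Finset.sum_congr rfl fun y _ => Nat.card_congr (Equiv.subtypeEquivRight fun x => ?_)
  dsimp only
  rw [hf (x + a) (y + b), hf x y]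
  have e1 : ∑ i, (x + a) i * π (y + b) i
      = (∑ i, x i * π (y + b) i) + ∑ i, a i * π (y + b) i := by
    simp [Pi.add_apply, add_mul, Finset.sum_add_distrib]
  have e2 : ∑ i, x i * (π (y + b) i + π y i)
      = (∑ i, x i * π (y + b) i) + ∑ i, x i * π y i := by
    simp [mul_add, Finset.sum_add_distrib]
  rw [e1, e2]
  have gen : ∀ A B C G1 G2 L c : ZMod 2,
      (A + B + G1 + (C + G2) + L = c ↔ A + C = c + B + G1 + G2 + L) := by decide
  exact gen _ _ _ _ _ _ _

/-- for `f(x,y) = ⟨x, Π(y)⟩ + g(y)` on F₂ⁿ × F₂ⁿ, the map `Π` is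
a permutation of F₂ⁿ iff for every `Λ ⊆ {0,…,n−1}` and every `(a,b) ≠ (0,0)`
the function `(x,y) ↦ f(x+a, y+b) + f(x,y) + Σ_{i∈Λ} yᵢbᵢ` is balanced,
taking each of the two values of F₂ exactly `2^{2n−1}` times; i.e. `f` is
shifted-bent with respect to any subset of the `y`-coordinate indices. -/
theorem stmt17 (n : ℕ) (hn : 0 < n)
    (g : (Fin n → ZMod 2) → ZMod 2)
    (π : (Fin n → ZMod 2) → (Fin n → ZMod 2))
    (f : (Fin n → ZMod 2) × (Fin n → ZMod 2) → ZMod 2)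
    (hf : ∀ x y : Fin n → ZMod 2, f (x, y) = (∑ i, x i * π y i) + g y) :
    Bijective π ↔
    ∀ (Λ : Finset (Fin n)) (a b : Fin n → ZMod 2), (a, b) ≠ (0, 0) →
      ∀ c : ZMod 2,
        Nat.card {p : (Fin n → ZMod 2) × (Fin n → ZMod 2) //
          f (p.1 + a, p.2 + b) + f p + ∑ i ∈ Λ, p.2 i * b i = c}
          = 2 ^ (2 * n - 1) := by
  classical
  have hV : Fintype.card (Fin n → ZMod 2) = 2 ^ n := by simp
  have huu : ∀ u : ZMod 2, u + u = 0 := by decide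
  have hadd0 : ∀ u v : ZMod 2, u + v = 0 ↔ u = v := by decide
  have hpow1 : 2 ^ n * 2 ^ (n - 1) = 2 ^ (2 * n - 1) := by
    rw [← pow_add]; congr 1; omega
  -- the key computation for b = 0
  have hb0 : ∀ (Λ : Finset (Fin n)) (a : Fin n → ZMod 2) (c : ZMod 2),
      Nat.card {p : (Fin n → ZMod 2) × (Fin n → ZMod 2) //
          f (p.1 + a, p.2 + (0 : Fin n → ZMod 2)) + f p
            + ∑ i ∈ Λ, p.2 i * (0 : Fin n → ZMod 2) i = c}
        = 2 ^ n * Nat.card {y : Fin n → ZMod 2 // ∑ i, a i * π y i = c} := by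
    intro Λ a c
    rw [keycount g π f hf Λ a 0 c]
    have step : ∀ y : Fin n → ZMod 2,
        Nat.card {x : Fin n → ZMod 2 //
            ∑ i, x i * (π (y + 0) i + π y i)
              = c + (∑ i, a i * π (y + 0) i) + g (y + 0) + g y
                + ∑ i ∈ Λ, y i * (0 : Fin n → ZMod 2) i}
          = if (∑ i, a i * π y i) = c then 2 ^ n else 0 := by
      intro y
      have hiff : ∀ x : Fin n → ZMod 2,
          ((∑ i, x i * (π (y + 0) i + π y i))
              = c + (∑ i, a i * π (y + 0) i) + g (y + 0) + g y
                + ∑ i ∈ Λ, y i * (0 : Fin n → ZMod 2) i)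
            ↔ ((∑ i, a i * π y i) = c) := by
        intro x
        simp only [add_zero, Pi.zero_apply, mul_zero, Finset.sum_const_zero]
        rw [show ∑ i, x i * (π y i + π y i) = 0 by simp [huu]]
        have gen : ∀ s gg c : ZMod 2, (0 = c + s + gg + gg ↔ s = c) := by decide
        exact gen _ _ _
      rw [Nat.card_congr (Equiv.subtypeEquivRight hiff)]
      by_cases hsc : (∑ i, a i * π y i) = c
      · rw [if_pos hsc]
        calc Nat.card {_x : Fin n → ZMod 2 // (∑ i, a i * π y i) = c}
            = Nat.card (Fin n → ZMod 2) :=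
              Nat.card_congr (Equiv.subtypeUnivEquiv fun _ => hsc)
          _ = 2 ^ n := by rw [Nat.card_eq_fintype_card, hV]
      · rw [if_neg hsc]
        haveI : IsEmpty {_x : Fin n → ZMod 2 // (∑ i, a i * π y i) = c} := ⟨fun x => hsc x.2⟩
        exact Nat.card_of_isEmpty
    rw [Finset.sum_congr rfl fun y _ => step y, ← Finset.sum_filter, Finset.sum_const,
      smul_eq_mul, Nat.card_eq_fintype_card, Fintype.card_subtype, mul_comm]
  constructor
  · -- forward
    intro hbij Λ a b hab c
    by_cases hb : b = 0
    · subst hb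
      have ha : a ≠ 0 := by rintro rfl; exact hab rfl
      rw [hb0 Λ a c]
      have e1 : Nat.card {y : Fin n → ZMod 2 // ∑ i, a i * π y i = c}
          = Nat.card {z : Fin n → ZMod 2 // ∑ i, a i * z i = c} :=
        Nat.card_congr ((Equiv.ofBijective π hbij).subtypeEquiv fun y => Iff.rfl)
      have e2 : Nat.card {z : Fin n → ZMod 2 // ∑ i, a i * z i = c}
          = Nat.card {z : Fin n → ZMod 2 // ∑ i, z i * a i = c} :=
        Nat.card_congr (Equiv.subtypeEquivRight fun z => by simp [mul_comm])
      rw [e1, e2, lin_balanced hn a ha c, hpow1]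
    · rw [keycount g π f hf Λ a b c]
      have step : ∀ (y : Fin n → ZMod 2) (c' : ZMod 2),
          Nat.card {x : Fin n → ZMod 2 // ∑ i, x i * (π (y + b) i + π y i) = c'}
            = 2 ^ (n - 1) := by
        intro y c'
        have hw : (π (y + b) + π y) ≠ 0 := by
          intro h0
          have heq : π (y + b) = π y := funext fun i => (hadd0 _ _).mp (congrFun h0 i)
          have := hbij.1 heq
          apply hb
          rwa [add_eq_left] at this
        exact lin_balanced hn (π (y + b) + π y) hw c'
      simp only [step]
      rw [Finset.sum_const, smul_eq_mul, Finset.card_univ, hV, hpow1]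
  · -- converse
    intro H
    have hbal : ∀ a : Fin n → ZMod 2, a ≠ 0 → ∀ c : ZMod 2,
        Nat.card {y : Fin n → ZMod 2 // ∑ i, a i * π y i = c} = 2 ^ (n - 1) := by
      intro a ha c
      have h1 : 2 ^ n * Nat.card {y : Fin n → ZMod 2 // ∑ i, a i * π y i = c}
          = 2 ^ (2 * n - 1) :=
        (hb0 ∅ a c).symm.trans (H ∅ a 0 (by simp [ha]) c)
      rw [← hpow1] at h1
      exact Nat.eq_of_mul_eq_mul_left (pow_pos two_pos n) h1
    -- double counting
    set T := Nat.card {q : ((Fin n → ZMod 2) × (Fin n → ZMod 2)) × (Fin n → ZMod 2) //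
        ∑ i, q.2 i * (π q.1.1 i + π q.1.2 i) = 0} with hTdef
    set P := Nat.card {p : (Fin n → ZMod 2) × (Fin n → ZMod 2) // π p.1 = π p.2} with hPdef
    have wayA : T = 2 ^ n * 2 ^ (2 * n - 1) + 2 ^ (2 * n - 1) := by
      rw [hTdef, natcard_prod_snd]
      have step : ∀ a0 : Fin n → ZMod 2,
          Nat.card {p : (Fin n → ZMod 2) × (Fin n → ZMod 2) //
              ∑ i, a0 i * (π p.1 i + π p.2 i) = 0}
            = 2 ^ n * 2 ^ (n - 1) + (if a0 = 0 then 2 ^ n * 2 ^ (n - 1) else 0) := by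
        intro a0
        have hc : ∀ p : (Fin n → ZMod 2) × (Fin n → ZMod 2),
            ((∑ i, a0 i * (π p.1 i + π p.2 i)) = 0)
              ↔ (∑ i, a0 i * π p.1 i) = (∑ i, a0 i * π p.2 i) := by
          intro p
          rw [show ∑ i, a0 i * (π p.1 i + π p.2 i)
              = (∑ i, a0 i * π p.1 i) + ∑ i, a0 i * π p.2 i by
            simp [mul_add, Finset.sum_add_distrib]]
          exact hadd0 _ _
        rw [Nat.card_congr (Equiv.subtypeEquivRight hc), natcard_prod_snd]
        by_cases h0 : a0 = 0
        · subst h0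
          rw [if_pos rfl]
          have : ∀ y2 : Fin n → ZMod 2,
              Nat.card {y1 : Fin n → ZMod 2 //
                  (∑ i, (0 : Fin n → ZMod 2) i * π y1 i)
                    = ∑ i, (0 : Fin n → ZMod 2) i * π y2 i} = 2 ^ n := by
            intro y2
            calc Nat.card {y1 : Fin n → ZMod 2 // _}
                = Nat.card (Fin n → ZMod 2) :=
                  Nat.card_congr (Equiv.subtypeUnivEquiv fun _ => by simp)
              _ = 2 ^ n := by rw [Nat.card_eq_fintype_card, hV]
          simp only [this]
          rw [Finset.sum_const, smul_eq_mul, Finset.card_univ, hV]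
          have hd : 2 * 2 ^ (n - 1) = 2 ^ n := by
            conv_rhs => rw [← Nat.sub_add_cancel hn]
            rw [pow_succ]; ring
          rw [← hd]; ring
        · rw [if_neg h0]
          have : ∀ y2 : Fin n → ZMod 2,
              Nat.card {y1 : Fin n → ZMod 2 //
                  (∑ i, a0 i * π y1 i) = ∑ i, a0 i * π y2 i} = 2 ^ (n - 1) :=
            fun y2 => hbal a0 h0 _
          simp only [this]
          rw [Finset.sum_const, smul_eq_mul, Finset.card_univ, hV]
          omega
      rw [Finset.sum_congr rfl fun a0 _ => step a0]
      rw [Finset.sum_add_distrib, Finset.sum_const, Finset.sum_ite_eq' univ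
        (0 : Fin n → ZMod 2) (fun _ => 2 ^ n * 2 ^ (n - 1))]
      simp only [Finset.mem_univ, if_pos, smul_eq_mul, Finset.card_univ, hV, hpow1]
    have wayB : T = 2 ^ n * 2 ^ (2 * n - 1) + 2 ^ (n - 1) * P := by
      rw [hTdef, natcard_prod_fst]
      have step : ∀ p : (Fin n → ZMod 2) × (Fin n → ZMod 2),
          Nat.card {a0 : Fin n → ZMod 2 // ∑ i, a0 i * (π p.1 i + π p.2 i) = 0}
            = 2 ^ (n - 1) + (if π p.1 = π p.2 then 2 ^ (n - 1) else 0) := by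
        intro p
        by_cases hp : π p.1 = π p.2
        · rw [if_pos hp]
          calc Nat.card {a0 : Fin n → ZMod 2 // ∑ i, a0 i * (π p.1 i + π p.2 i) = 0}
              = Nat.card (Fin n → ZMod 2) :=
                Nat.card_congr (Equiv.subtypeUnivEquiv fun a0 => by simp [hp, huu])
            _ = 2 ^ (n - 1) + 2 ^ (n - 1) := by
                rw [Nat.card_eq_fintype_card, hV]
                have : 2 ^ n = 2 * 2 ^ (n - 1) := by
                  conv_lhs => rw [← Nat.sub_add_cancel hn]
                  rw [pow_succ]; ring
                omega
        · rw [if_neg hp, add_zero]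
          have hw : (π p.1 + π p.2) ≠ 0 := by
            intro h0
            exact hp (funext fun i => (hadd0 _ _).mp (congrFun h0 i))
          exact lin_balanced hn (π p.1 + π p.2) hw 0
      rw [Finset.sum_congr rfl fun p _ => step p]
      rw [Finset.sum_add_distrib, Finset.sum_const, ← Finset.sum_filter, Finset.sum_const]
      simp only [smul_eq_mul, Finset.card_univ, Fintype.card_prod, hV]
      rw [hPdef, Nat.card_eq_fintype_card, Fintype.card_subtype]
      have h1 : 2 ^ n * 2 ^ n * 2 ^ (n - 1) = 2 ^ n * 2 ^ (2 * n - 1) := by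
        rw [mul_assoc, hpow1]
      rw [h1, mul_comm (Finset.filter _ _).card (2 ^ (n - 1))]
    have hP : P = 2 ^ n := by
      have h3 : 2 ^ (n - 1) * 2 ^ n = 2 ^ (2 * n - 1) := by
        rw [← pow_add]; congr 1; omega
      have h2 : 2 ^ (2 * n - 1) = 2 ^ (n - 1) * P :=
        Nat.add_left_cancel (wayA.symm.trans wayB)
      exact (Nat.eq_of_mul_eq_mul_left (pow_pos two_pos _) (h3.trans h2)).symm
    -- injectivity from P = 2^n
    rw [hPdef, natcard_prod_fst] at hP
    have hfib : ∀ y1 : Fin n → ZMod 2,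
        1 ≤ Nat.card {y2 : Fin n → ZMod 2 // π y1 = π y2} := by
      intro y1
      haveI : Nonempty {y2 : Fin n → ZMod 2 // π y1 = π y2} := ⟨⟨y1, rfl⟩⟩
      exact Nat.card_pos
    have htot : ∑ _y1 : Fin n → ZMod 2, (1 : ℕ) = 2 ^ n := by
      rw [Finset.sum_const, smul_eq_mul, mul_one, Finset.card_univ, hV]
    have hall := (Finset.sum_eq_sum_iff_of_le (fun y1 _ => hfib y1)).mp (htot.trans hP.symm)
    have hinj : Injective π := by
      intro u v huv
      have h1 : Nat.card {y2 : Fin n → ZMod 2 // π u = π y2} = 1 :=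
        (hall u (Finset.mem_univ u)).symm
      haveI := (Nat.card_eq_one_iff_unique.mp h1).1
      exact congrArg Subtype.val
        (Subsingleton.elim (⟨u, rfl⟩ : {y2 : Fin n → ZMod 2 // π u = π y2}) ⟨v, huv⟩)
    exact Finite.injective_iff_bijective.mp hinj
end

section
/- Let F = F_{2^n} with a fixed basis (ξ_0,…,ξ_{n−1}) over F_2, and for y ∈ F write y = Σ_i y_i ξ_i with y_i ∈ F_2. Let g : F → F be an arbitrary function, let Π : F → F, and define f : F × F → F by f(x,y) = x·Π(y) + g(y). Then Π is a permutation of F if and only if for every nonzero F_2-linear functional ℓ : F → F_2, every subset Λ ⊆ {0,…,n−1}, and every (a,b) ∈ F × F with (a,b) ≠ (0,0), the Boolean function (x,y) ↦ ℓ(f(x+a, y+b)) + ℓ(f(x,y)) + Σ_{i∈Λ} y_i b_i on F × F is balanced, i.e. takes each of the two values of F_2 exactly 2^{2n−1} times. (That is, every component function of f is shifted-bent with respect to any subset of the y-coordinate indices if and only if Π is a permutation.) -/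
open Function

private def chi : ZMod 2 → ℤ := fun z => if z = 0 then 1 else -1

private lemma chi_add : ∀ z w : ZMod 2, chi (z + w) = chi z * chi w := by decide

private lemma chi_zero : chi 0 = 1 := rfl

private lemma chi_add_one : ∀ z : ZMod 2, chi (z + 1) = - chi z := by decide

private lemma chi_sum : ∑ c : ZMod 2, chi c = 0 := by decide

private lemma zmod2_ne_iff : ∀ z c : ZMod 2, (¬ z = c) ↔ z = c + 1 := by decide

private lemma zmod2_add_one_one : ∀ c : ZMod 2, c + 1 + 1 = c := by decide

private lemma zmod2_eq_one (z : ZMod 2) (h : z ≠ 0) : z = 1 := by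
  rcases (by decide : ∀ w : ZMod 2, w = 0 ∨ w = 1) z with h' | h'
  · exact absurd h' h
  · exact h'

private lemma pair_count {α : Type*} [Fintype α] (Φ : α → ZMod 2) (e : α → α)
    (he : ∀ x, e (e x) = x) (hp : ∀ x, Φ (e x) = Φ x + 1) (c : ZMod 2) :
    2 * Nat.card {x // Φ x = c} = Fintype.card α := by
  classical
  have key : Nat.card {x // Φ x = c} = Nat.card {x // Φ x = c + 1} :=
    Nat.card_congr
      ⟨fun x => ⟨e x.1, by rw [hp, x.2]⟩,
       fun y => ⟨e y.1, by rw [hp, y.2, zmod2_add_one_one]⟩,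
       fun x => Subtype.ext (he x.1),
       fun y => Subtype.ext (he y.1)⟩
  have hsplit := Finset.card_filter_add_card_filter_not
    (s := (Finset.univ : Finset α)) (p := fun x => Φ x = c)
  have h0 : Nat.card {x // Φ x = c} = (Finset.univ.filter (fun x => Φ x = c)).card := by
    rw [Nat.card_eq_fintype_card, Fintype.card_subtype]
  have h1 : Nat.card {x // Φ x = c + 1}
      = (Finset.univ.filter (fun x => ¬ Φ x = c)).card := by
    rw [Nat.card_eq_fintype_card, Fintype.card_subtype]
    congr 1
    apply Finset.filter_congr
    intro x _
    exact (zmod2_ne_iff (Φ x) c).symm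
  rw [Finset.card_univ] at hsplit
  omega

private lemma card_prod_snd {α β : Type*} (Q : β → Prop) :
    Nat.card {p : α × β // Q p.2} = Nat.card α * Nat.card {y // Q y} := by
  have e : {p : α × β // Q p.2} ≃ α × {y // Q y} :=
    ⟨fun p => (p.1.1, ⟨p.1.2, p.2⟩), fun q => ⟨(q.1, q.2.1), q.2.2⟩,
     fun p => rfl, fun q => rfl⟩
  rw [Nat.card_congr e, Nat.card_prod]

/-- for `f(x,y) = x·Π(y) + g(y)` on F_{2ⁿ} × F_{2ⁿ} (with
coordinates taken w.r.t. a fixed basis `B` of F_{2ⁿ} over F₂), the map `Π` is a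
permutation of F_{2ⁿ} iff every component function `ℓ ∘ f` (for nonzero
F₂-linear functionals `ℓ`) is shifted-bent with respect to any subset `Λ` of
the `y`-coordinate indices: for all `(a,b) ≠ (0,0)` the function
`(x,y) ↦ ℓ(f(x+a, y+b)) + ℓ(f(x,y)) + Σ_{i∈Λ} yᵢbᵢ` takes each of the two
values of F₂ exactly `2^{2n−1}` times. -/
theorem stmt18 (n : ℕ) (hn : 0 < n)
    (B : Module.Basis (Fin n) (ZMod 2) (GaloisField 2 n))
    (g : GaloisField 2 n → GaloisField 2 n)
    (π : GaloisField 2 n → GaloisField 2 n)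
    (f : GaloisField 2 n × GaloisField 2 n → GaloisField 2 n)
    (hf : ∀ x y : GaloisField 2 n, f (x, y) = x * π y + g y) :
    Bijective π ↔
    ∀ ℓ : GaloisField 2 n →ₗ[ZMod 2] ZMod 2, ℓ ≠ 0 →
      ∀ (Λ : Finset (Fin n)) (a b : GaloisField 2 n), (a, b) ≠ (0, 0) →
        ∀ c : ZMod 2,
          Nat.card {p : GaloisField 2 n × GaloisField 2 n //
            ℓ (f (p.1 + a, p.2 + b)) + ℓ (f p)
              + ∑ i ∈ Λ, B.repr p.2 i * B.repr b i = c}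
            = 2 ^ (2 * n - 1) := by
  classical
  letI : Fintype (GaloisField 2 n) := Fintype.ofFinite _
  letI : Finite (GaloisField 2 n →ₗ[ZMod 2] ZMod 2) :=
    Finite.of_injective (fun ℓ => (ℓ : GaloisField 2 n → ZMod 2)) DFunLike.coe_injective
  have h2 : (2 : (GaloisField 2 n)) = 0 := CharTwo.two_eq_zero
  have hcardF : Fintype.card (GaloisField 2 n) = 2 ^ n := by
    rw [← Nat.card_eq_fintype_card]
    exact GaloisField.card 2 n hn.ne'
  have hcardFF : Fintype.card ((GaloisField 2 n) × (GaloisField 2 n)) = 2 * 2 ^ (2 * n - 1) := by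
    rw [Fintype.card_prod, hcardF, ← pow_add]
    have hnn : n + n = (2 * n - 1) + 1 := by omega
    rw [hnn, pow_succ']
  constructor
  · -- forward direction
    intro hπ ℓ hℓ Λ a b hab c
    have hones : ∀ D : GaloisField 2 n, D ≠ 0 → ∃ t, ℓ (t * D) = 1 := by
      intro D hD
      by_contra h
      push_neg at h
      apply hℓ
      ext z
      have hz : ℓ ((z * D⁻¹) * D) = 0 := by
        have := h (z * D⁻¹)
        rcases (by decide : ∀ w : ZMod 2, w = 0 ∨ w = 1) (ℓ ((z * D⁻¹) * D)) with h' | h'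
        · exact h'
        · exact absurd h' this
      rw [mul_assoc, inv_mul_cancel₀ hD, mul_one] at hz
      simpa using hz
    by_cases hb : b = 0
    · -- b = 0, a ≠ 0 case
      subst hb
      have ha : a ≠ 0 := by simpa using hab
      obtain ⟨s, hs⟩ := hones a ha
      have hsa : ℓ (a * s) = 1 := by rw [mul_comm]; exact hs
      set σ : (GaloisField 2 n) ≃ (GaloisField 2 n) := Equiv.ofBijective π hπ with hσ
      have hcomp : ∀ u : GaloisField 2 n, π (σ.symm u) = u := fun u => σ.apply_symm_apply u
      have hcomp' : ∀ u : GaloisField 2 n, σ.symm (π u) = u := fun u => σ.symm_apply_apply u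
      set e : (GaloisField 2 n) × (GaloisField 2 n) → (GaloisField 2 n) × (GaloisField 2 n) := fun p => (p.1, σ.symm (π p.2 + s)) with he_def
      have he : ∀ p, e (e p) = p := by
        rintro ⟨x, y⟩
        simp only [he_def]
        rw [hcomp, add_assoc, CharTwo.add_self_eq_zero, add_zero, hcomp']
      have hp : ∀ p : GaloisField 2 n × GaloisField 2 n,
          (ℓ (f ((e p).1 + a, (e p).2 + 0)) + ℓ (f (e p))
            + ∑ i ∈ Λ, B.repr (e p).2 i * B.repr (0 : (GaloisField 2 n)) i)
          = (ℓ (f (p.1 + a, p.2 + 0)) + ℓ (f p)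
            + ∑ i ∈ Λ, B.repr p.2 i * B.repr (0 : (GaloisField 2 n)) i) + 1 := by
        rintro ⟨x, y⟩
        simp only [he_def, add_zero, map_zero, Finsupp.coe_zero, Pi.zero_apply, mul_zero,
          Finset.sum_const_zero]
        rw [hf, hf, hf, hf, hcomp]
        rw [← map_add, ← map_add]
        have hA : (x + a) * (π y + s) + g (σ.symm (π y + s))
              + ((x) * (π y + s) + g (σ.symm (π y + s)))
            = ((x + a) * π y + g y + (x * π y + g y)) + a * s := by
          linear_combination (x * s + g (σ.symm (π y + s)) - g y) * h2
        rw [hA, map_add, hsa]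
      have key := pair_count
        (fun p : GaloisField 2 n × GaloisField 2 n => ℓ (f (p.1 + a, p.2 + 0)) + ℓ (f p)
          + ∑ i ∈ Λ, B.repr p.2 i * B.repr (0 : (GaloisField 2 n)) i) e he hp c
      rw [hcardFF] at key
      exact Nat.eq_of_mul_eq_mul_left (by norm_num : 0 < 2) key
    · -- b ≠ 0 case
      have hD : ∀ y : GaloisField 2 n, π (y + b) + π y ≠ 0 := by
        intro y hy
        have : π (y + b) = π y := by
          have := CharTwo.add_eq_iff_eq_add.mp hy
          simpa using this
        have := hπ.injective this
        exact hb (by simpa using this)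
      set t : (GaloisField 2 n) → (GaloisField 2 n) := fun y => (hones _ (hD y)).choose with ht_def
      have ht : ∀ y : GaloisField 2 n, ℓ (t y * (π (y + b) + π y)) = 1 :=
        fun y => (hones _ (hD y)).choose_spec
      set e : (GaloisField 2 n) × (GaloisField 2 n) → (GaloisField 2 n) × (GaloisField 2 n) := fun p => (p.1 + t p.2, p.2) with he_def
      have he : ∀ p, e (e p) = p := by
        rintro ⟨x, y⟩
        simp only [he_def]
        rw [add_assoc, CharTwo.add_self_eq_zero, add_zero]
      have hp : ∀ p : GaloisField 2 n × GaloisField 2 n,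
          (ℓ (f ((e p).1 + a, (e p).2 + b)) + ℓ (f (e p))
            + ∑ i ∈ Λ, B.repr (e p).2 i * B.repr b i)
          = (ℓ (f (p.1 + a, p.2 + b)) + ℓ (f p)
            + ∑ i ∈ Λ, B.repr p.2 i * B.repr b i) + 1 := by
        rintro ⟨x, y⟩
        simp only [he_def]
        rw [hf, hf, hf, hf]
        have expand : ℓ ((x + t y + a) * π (y + b) + g (y + b)) + ℓ ((x + t y) * π y + g y)
            = (ℓ ((x + a) * π (y + b) + g (y + b)) + ℓ (x * π y + g y)) + 1 := by
          rw [← map_add, ← map_add]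
          have hA : (x + t y + a) * π (y + b) + g (y + b) + ((x + t y) * π y + g y)
              = ((x + a) * π (y + b) + g (y + b) + (x * π y + g y))
                + t y * (π (y + b) + π y) := by ring
          rw [hA, map_add, ht y]
        rw [expand]
        ring
      have key := pair_count
        (fun p : GaloisField 2 n × GaloisField 2 n => ℓ (f (p.1 + a, p.2 + b)) + ℓ (f p)
          + ∑ i ∈ Λ, B.repr p.2 i * B.repr b i) e he hp c
      rw [hcardFF] at key
      exact Nat.eq_of_mul_eq_mul_left (by norm_num : 0 < 2) key
  · -- converse direction
    intro H
    have hbal : ∀ m : GaloisField 2 n →ₗ[ZMod 2] ZMod 2, m ≠ 0 → ∀ c : ZMod 2,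
        Nat.card {y : GaloisField 2 n // m (π y) = c} = 2 ^ (n - 1) := by
      intro m hm c
      have h1 := H m hm ∅ 1 0 (by simp) c
      have hval : ∀ x y : GaloisField 2 n,
          m (f (x + 1, y + 0)) + m (f (x, y))
            + ∑ i ∈ (∅ : Finset (Fin n)), B.repr y i * B.repr (0 : (GaloisField 2 n)) i
          = m (π y) := by
        intro x y
        simp only [add_zero, Finset.sum_empty]
        rw [hf, hf, ← map_add]
        have : (x + 1) * π y + g y + (x * π y + g y) = π y := by
          linear_combination (x * π y + g y) * h2
        rw [this]
      have h2' : Nat.card {p : GaloisField 2 n × GaloisField 2 n // m (π p.2) = c} = 2 ^ (2 * n - 1) := by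
        rw [← h1]
        apply Nat.card_congr
        apply Equiv.subtypeEquivRight
        rintro ⟨x, y⟩
        dsimp only
        rw [hval x y]
      rw [card_prod_snd (fun y : GaloisField 2 n => m (π y) = c)] at h2'
      have hcF : Nat.card (GaloisField 2 n) = 2 ^ n := GaloisField.card 2 n hn.ne'
      rw [hcF] at h2'
      have hsplit : (2 : ℕ) ^ (2 * n - 1) = 2 ^ n * 2 ^ (n - 1) := by
        rw [← pow_add]
        congr 1
        omega
      rw [hsplit] at h2'
      exact Nat.eq_of_mul_eq_mul_left (pow_pos (by norm_num) n) h2'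
    rw [← Finite.surjective_iff_bijective]
    intro v
    by_contra hv
    push_neg at hv
    -- dual space setup
    letI : Fintype (GaloisField 2 n →ₗ[ZMod 2] ZMod 2) := Fintype.ofFinite _
    have hsum0 : ∀ m : GaloisField 2 n →ₗ[ZMod 2] ZMod 2, m ≠ 0 → ∑ y : GaloisField 2 n, chi (m (π y)) = 0 := by
      intro m hm
      rw [← Finset.sum_fiberwise (Finset.univ : Finset (GaloisField 2 n)) (fun y => m (π y))
        (fun y => chi (m (π y)))]
      have hc : ∀ c : ZMod 2,
          ∑ y ∈ Finset.univ.filter (fun y => m (π y) = c), chi (m (π y))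
          = (2 ^ (n - 1) : ℤ) * chi c := by
        intro c
        rw [Finset.sum_congr rfl (fun y hy => by rw [(Finset.mem_filter.mp hy).2])]
        rw [Finset.sum_const]
        have hcard : (Finset.univ.filter (fun y => m (π y) = c)).card = 2 ^ (n - 1) := by
          rw [← Fintype.card_subtype, ← Nat.card_eq_fintype_card]
          exact hbal m hm c
        rw [hcard, nsmul_eq_mul]
        push_cast
        ring
      rw [Finset.sum_congr rfl (fun c _ => hc c), ← Finset.mul_sum, chi_sum, mul_zero]
    have horth : ∀ w : GaloisField 2 n, w ≠ 0 → ∑ ℓ : GaloisField 2 n →ₗ[ZMod 2] ZMod 2, chi (ℓ w) = 0 := by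
      intro w hw
      obtain ⟨i, hi⟩ : ∃ i, B.repr w i ≠ 0 := by
        by_contra h
        push_neg at h
        apply hw
        have : B.repr w = 0 := Finsupp.ext h
        simpa using congrArg B.repr.symm this
      have hi1 : B.coord i w = 1 := by
        rw [Module.Basis.coord_apply]
        exact zmod2_eq_one _ hi
      have hre : ∑ ℓ : GaloisField 2 n →ₗ[ZMod 2] ZMod 2, chi ((ℓ + B.coord i) w)
          = ∑ ℓ : GaloisField 2 n →ₗ[ZMod 2] ZMod 2, chi (ℓ w) :=
        Fintype.sum_equiv (Equiv.addRight (B.coord i)) _ _ (fun ℓ => rfl)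
      have hre2 : ∑ ℓ : GaloisField 2 n →ₗ[ZMod 2] ZMod 2, chi ((ℓ + B.coord i) w)
          = - ∑ ℓ : GaloisField 2 n →ₗ[ZMod 2] ZMod 2, chi (ℓ w) := by
        rw [← Finset.sum_neg_distrib]
        apply Finset.sum_congr rfl
        intro ℓ _
        rw [LinearMap.add_apply, hi1, chi_add_one]
      rw [hre2] at hre
      linarith
    have hT1 : ∑ y : GaloisField 2 n, ∑ ℓ : GaloisField 2 n →ₗ[ZMod 2] ZMod 2, chi (ℓ (π y - v)) = 0 := by
      apply Finset.sum_eq_zero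
      intro y _
      exact horth _ (sub_ne_zero.mpr (hv y))
    have hT2 : ∑ y : GaloisField 2 n, ∑ ℓ : GaloisField 2 n →ₗ[ZMod 2] ZMod 2, chi (ℓ (π y - v)) = 2 ^ n := by
      rw [Finset.sum_comm]
      have hterm : ∀ ℓ : GaloisField 2 n →ₗ[ZMod 2] ZMod 2,
          ∑ y : GaloisField 2 n, chi (ℓ (π y - v)) = (∑ y : GaloisField 2 n, chi (ℓ (π y))) * chi (ℓ v) := by
        intro ℓ
        rw [Finset.sum_mul]
        apply Finset.sum_congr rfl
        intro y _
        rw [map_sub, CharTwo.sub_eq_add, chi_add]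
      rw [Finset.sum_congr rfl (fun ℓ _ => hterm ℓ)]
      rw [Finset.sum_eq_single (0 : (GaloisField 2 n) →ₗ[ZMod 2] ZMod 2)]
      · simp only [LinearMap.zero_apply, chi_zero, mul_one]
        rw [Finset.sum_const, Finset.card_univ, hcardF, nsmul_eq_mul]
        push_cast
        ring
      · intro ℓ _ hℓ
        rw [hsum0 ℓ hℓ, zero_mul]
      · intro h
        exact absurd (Finset.mem_univ _) h
    rw [hT1] at hT2
    have hpos : (0 : ℤ) < 2 ^ n := by positivity
    omega
end

section
/- Let m, n be positive integers, let Π_1 : F_2^m → F_2 be shifted-bent with respect to Λ_1 ⊆ {0,…,m−1}, and let Π_2 : F_2^n → F_2 be shifted-bent with respect to Λ_2 ⊆ {0,…,n−1}. Then f : F_2^m × F_2^n → F_2 defined by f(x,y) := Π_1(x) + Π_2(y) is shifted-bent with respect to the union of Λ_1 (among the x-coordinates) and Λ_2 (among the y-coordinates); i.e. for every (a,b) ∈ F_2^m × F_2^n with (a,b) ≠ (0,0), the Boolean function (x,y) ↦ f(x+a, y+b) + f(x,y) + Σ_{i∈Λ_1} x_i a_i + Σ_{j∈Λ_2} y_j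 b_j is balanced on F_2^m × F_2^n, taking each of the two values of F_2 exactly 2^{m+n−1} times. -/
open Function

lemma helper19 {α β : Type*} [Fintype α] [Fintype β] (g : α → ZMod 2) (h : β → ZMod 2)
    (c : ZMod 2) (k : ℕ) (hh : ∀ d, Nat.card {y // h y = d} = k) :
    Nat.card {p : α × β // g p.1 + h p.2 = c} = Fintype.card α * k := by
  have e : {p : α × β // g p.1 + h p.2 = c} ≃ Σ x : α, {y // h y = c - g x} :=
    { toFun := fun p => ⟨p.1.1, p.1.2, by
        have := p.2; rw [eq_sub_iff_add_eq']; exact this⟩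
      invFun := fun s => ⟨(s.1, s.2.1), by
        have := s.2.2; rwa [eq_sub_iff_add_eq'] at this⟩
      left_inv := fun p => rfl
      right_inv := fun s => rfl }
  rw [Nat.card_congr e, Nat.card_eq_fintype_card, Fintype.card_sigma]
  have : ∀ x : α, Fintype.card {y // h y = c - g x} = k := fun x => by
    rw [← Nat.card_eq_fintype_card, hh]
  simp [this, mul_comm]

/-- A Boolean function `F` on F₂^m is shifted-bent (bent₄) with respect to an
index set `Λ ⊆ {0,…,m−1}` if for every nonzero `a` the function
`x ↦ F(x+a) + F(x) + Σ_{i∈Λ} xᵢaᵢ` is balanced, i.e. takes each of the two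
values of F₂ exactly `2^{m−1}` times. -/
def ShiftedBent {m : ℕ} (F : (Fin m → ZMod 2) → ZMod 2) (Λ : Finset (Fin m)) :
    Prop :=
  ∀ a : Fin m → ZMod 2, a ≠ 0 → ∀ c : ZMod 2,
    Nat.card {x : Fin m → ZMod 2 //
      F (x + a) + F x + ∑ i ∈ Λ, x i * a i = c} = 2 ^ (m - 1)

/-- if `P₁` is shifted-bent on F₂^m w.r.t. `Λ₁` and `P₂` is
shifted-bent on F₂ⁿ w.r.t. `Λ₂`, then `f(x,y) = P₁(x) + P₂(y)` is shifted-bent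
w.r.t. the union of `Λ₁` (among the x-coordinates) and `Λ₂` (among the
y-coordinates): for every `(a,b) ≠ (0,0)` the function
`(x,y) ↦ f(x+a,y+b) + f(x,y) + Σ_{i∈Λ₁} xᵢaᵢ + Σ_{j∈Λ₂} yⱼbⱼ` takes each of
the two values of F₂ exactly `2^{m+n−1}` times. -/
theorem stmt19 (m n : ℕ) (hm : 0 < m) (hn : 0 < n)
    (P₁ : (Fin m → ZMod 2) → ZMod 2) (P₂ : (Fin n → ZMod 2) → ZMod 2)
    (Λ₁ : Finset (Fin m)) (Λ₂ : Finset (Fin n))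
    (h₁ : ShiftedBent P₁ Λ₁) (h₂ : ShiftedBent P₂ Λ₂)
    (f : (Fin m → ZMod 2) × (Fin n → ZMod 2) → ZMod 2)
    (hf : ∀ x y, f (x, y) = P₁ x + P₂ y) :
    ∀ (a : Fin m → ZMod 2) (b : Fin n → ZMod 2), (a, b) ≠ (0, 0) →
      ∀ c : ZMod 2,
        Nat.card {p : (Fin m → ZMod 2) × (Fin n → ZMod 2) //
          f (p.1 + a, p.2 + b) + f p
            + ∑ i ∈ Λ₁, p.1 i * a i + ∑ j ∈ Λ₂, p.2 j * b j = c}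
          = 2 ^ (m + n - 1) := by
  intro a b hab c
  set g : (Fin m → ZMod 2) → ZMod 2 :=
    fun x => P₁ (x + a) + P₁ x + ∑ i ∈ Λ₁, x i * a i with hg
  set h : (Fin n → ZMod 2) → ZMod 2 :=
    fun y => P₂ (y + b) + P₂ y + ∑ j ∈ Λ₂, y j * b j with hhdef
  have key : ∀ p : (Fin m → ZMod 2) × (Fin n → ZMod 2),
      (f (p.1 + a, p.2 + b) + f p
        + ∑ i ∈ Λ₁, p.1 i * a i + ∑ j ∈ Λ₂, p.2 j * b j = c)
      ↔ g p.1 + h p.2 = c := by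
    intro p
    rw [hf, show f p = P₁ p.1 + P₂ p.2 from hf p.1 p.2, hg, hhdef]
    constructor <;> intro h' <;> [rw [← h']; rw [← h']] <;> ring
  rw [Nat.card_congr (Equiv.subtypeEquivRight key)]
  by_cases hb : b = 0
  · have ha : a ≠ 0 := fun h' => hab (by rw [h', hb])
    have e2 : {p : (Fin m → ZMod 2) × (Fin n → ZMod 2) // g p.1 + h p.2 = c} ≃
        {q : (Fin n → ZMod 2) × (Fin m → ZMod 2) // h q.1 + g q.2 = c} :=
      { toFun := fun p => ⟨(p.1.2, p.1.1), by rw [add_comm]; exact p.2⟩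
        invFun := fun q => ⟨(q.1.2, q.1.1), by rw [add_comm]; exact q.2⟩
        left_inv := fun p => rfl
        right_inv := fun q => rfl }
    rw [Nat.card_congr e2, helper19 h g c (2 ^ (m - 1)) (fun d => h₁ a ha d)]
    have : Fintype.card (Fin n → ZMod 2) = 2 ^ n := by simp
    rw [this, ← pow_add]
    congr 1
    omega
  · rw [helper19 g h c (2 ^ (n - 1)) (fun d => h₂ b hb d)]
    have : Fintype.card (Fin m → ZMod 2) = 2 ^ m := by simp
    rw [this, ← pow_add]
    congr 1
    omega
end
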